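/- arXiv:1709.08571 — 4 statements merged into one kernel-verified Lean document; each statement's English description precedes it below -/
import Mathlib

section
/- Let f : ℝ^d → ℝ be twice continuously differentiable with L2-Lipschitz Hessian (L2 > 0), and let ε₂ ∈ (0,1). Let H be a symmetric d×d matrix with ‖H − ∇²f(x)‖₂ ≤ ε₃ where 0 ≤ ε₃ ≤ ε₂/24, and let g ∈ ℝ^d satisfy ‖g − ∇f(x)‖ ≤ ε₄ with 0 ≤ ε₄ ≤ ε₂²/(24·L2). Let v be a unit vector and set x⁺ = x − (ε₂/L2)·sign(vᵀg)·v. Then f(x) − f(x⁺) ≥ −(ε₂²/(2·L2²))·vᵀHv − 11·ε₂³/(48·L2²). -/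
open scoped RealInnerProductSpace
open InnerProductSpace

noncomputable def sgn (t : ℝ) : ℝ := if 0 ≤ t then 1 else -1


lemma taylor_cubic {d : ℕ} (f : EuclideanSpace ℝ (Fin d) → ℝ) (L2 : ℝ) (hL2 : 0 ≤ L2)
    (hf : ContDiff ℝ 2 f)
    (hHlip : ∀ a b : EuclideanSpace ℝ (Fin d),
      ‖fderiv ℝ (gradient f) a - fderiv ℝ (gradient f) b‖ ≤ L2 * ‖a - b‖)
    (x p : EuclideanSpace ℝ (Fin d)) :
    f (x + p) ≤ f x + ⟪gradient f x, p⟫ + ⟪fderiv ℝ (gradient f) x p, p⟫ / 2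
      + L2 * ‖p‖ ^ 3 / 6 := by
  set G := gradient f with hG
  have hfd : Differentiable ℝ f := hf.differentiable (by norm_num)
  have hGdiff : Differentiable ℝ G := by
    have h1 : ContDiff ℝ 1 (fderiv ℝ f) := hf.fderiv_right (le_refl _)
    have : G = fun y => (toDual ℝ (EuclideanSpace ℝ (Fin d))).symm (fderiv ℝ f y) := rfl
    rw [this]
    exact (toDual ℝ (EuclideanSpace ℝ (Fin d))).symm.toContinuousLinearEquiv.differentiable.comp (h1.differentiable (by norm_num))
  have hgradinner : ∀ y : EuclideanSpace ℝ (Fin d), fderiv ℝ f y p = ⟪G y, p⟫ := fun y => toDual_symm_apply.symm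
  have hc : ∀ t : ℝ, HasDerivAt (fun s : ℝ => x + s • p) p t := by
    intro t
    simpa using ((hasDerivAt_id t).smul_const p).const_add x
  set Q : ℝ := ⟪fderiv ℝ G x p, p⟫ with hQ
  set K : ℝ := L2 * ‖p‖ ^ 3 with hK
  have hfder : ∀ t : ℝ, HasDerivAt (fun s : ℝ => f (x + s • p)) ⟪G (x + t • p), p⟫ t := by
    intro t
    have := (hfd (x + t • p)).hasFDerivAt.comp_hasDerivAt t (hc t)
    simpa [hgradinner, Function.comp_def] using this
  have hGder : ∀ t : ℝ, HasDerivAt (fun s : ℝ => ⟪G (x + s • p), p⟫)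
      ⟪fderiv ℝ G (x + t • p) p, p⟫ t := by
    intro t
    have h1 : HasDerivAt (fun s : ℝ => G (x + s • p)) (fderiv ℝ G (x + t • p) p) t :=
      by have h := (hGdiff (x + t • p)).hasFDerivAt.comp_hasDerivAt t (hc t); exact h
    simpa using h1.inner ℝ (hasDerivAt_const t p)
  -- the key bound on the difference of second-derivative terms
  have hbound : ∀ t : ℝ, 0 ≤ t → ⟪fderiv ℝ G (x + t • p) p, p⟫ - Q ≤ K * t := by
    intro t ht
    set A := fderiv ℝ G (x + t • p) - fderiv ℝ G x with hA
    have h1 : ⟪fderiv ℝ G (x + t • p) p, p⟫ - Q = ⟪A p, p⟫ := by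
      simp [hA, hQ, inner_sub_left]
    rw [h1]
    have h2 : ⟪A p, p⟫ ≤ ‖A p‖ * ‖p‖ := real_inner_le_norm _ _
    have h3 : ‖A p‖ ≤ ‖A‖ * ‖p‖ := A.le_opNorm p
    have h4 : ‖A‖ ≤ L2 * (t * ‖p‖) := by
      have h := hHlip (x + t • p) x
      rwa [add_sub_cancel_left, norm_smul, Real.norm_eq_abs, abs_of_nonneg ht] at h
    calc ⟪A p, p⟫ ≤ ‖A p‖ * ‖p‖ := h2
      _ ≤ (‖A‖ * ‖p‖) * ‖p‖ := by
          exact mul_le_mul_of_nonneg_right h3 (norm_nonneg p)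
      _ ≤ ((L2 * (t * ‖p‖)) * ‖p‖) * ‖p‖ := by
          have hpn : (0:ℝ) ≤ ‖p‖ := norm_nonneg p
          exact mul_le_mul_of_nonneg_right (mul_le_mul_of_nonneg_right h4 hpn) hpn
      _ = K * t := by rw [hK]; ring
  -- first-level function φ
  set φ : ℝ → ℝ := fun s => ⟪G (x + s • p), p⟫ - ⟪G x, p⟫ - s * Q - K * s ^ 2 / 2 with hφ
  have hφd : ∀ t : ℝ, HasDerivAt φ (⟪fderiv ℝ G (x + t • p) p, p⟫ - Q - K * t) t := by
    intro t
    have h2 : HasDerivAt (fun s : ℝ => s * Q) Q t := by simpa using (hasDerivAt_id t).mul_const Q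
    have h3 : HasDerivAt (fun s : ℝ => K * s ^ 2 / 2) (K * t) t := by
      have := ((hasDerivAt_pow 2 t).const_mul K).div_const 2
      convert this using 1 <;> [rfl; rfl; ring]
    exact (((hGder t).sub_const _).sub h2).sub h3
  have hφ0 : φ 0 = 0 := by simp [hφ]
  have hφle : ∀ t ∈ Set.Icc (0:ℝ) 1, φ t ≤ 0 := by
    have hant : AntitoneOn φ (Set.Icc (0:ℝ) 1) := by
      apply antitoneOn_of_deriv_nonpos (convex_Icc 0 1)
      · exact fun t _ => ((hφd t).differentiableAt).continuousAt.continuousWithinAt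
      · exact fun t _ => ((hφd t).differentiableAt).differentiableWithinAt
      · intro t ht
        rw [interior_Icc] at ht
        rw [(hφd t).deriv]
        have := hbound t ht.1.le
        linarith
    intro t ht
    have := hant ⟨le_rfl, zero_le_one⟩ ht ht.1
    rw [hφ0] at this
    exact this
  -- second-level function ψ
  set ψ : ℝ → ℝ := fun s => f (x + s • p) - f x - s * ⟪G x, p⟫ - s ^ 2 / 2 * Q
      - K * s ^ 3 / 6 with hψ
  have hψd : ∀ t : ℝ, HasDerivAt ψ (φ t) t := by
    intro t
    have h2 : HasDerivAt (fun s : ℝ => s * ⟪G x, p⟫) ⟪G x, p⟫ t := by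
      simpa using (hasDerivAt_id t).mul_const _
    have h3 : HasDerivAt (fun s : ℝ => s ^ 2 / 2 * Q) (t * Q) t := by
      have := ((hasDerivAt_pow 2 t).div_const 2).mul_const Q
      convert this using 1 <;> [rfl; rfl; ring]
    have h4 : HasDerivAt (fun s : ℝ => K * s ^ 3 / 6) (K * t ^ 2 / 2) t := by
      have := ((hasDerivAt_pow 3 t).const_mul K).div_const 6
      convert this using 1 <;> [rfl; rfl; ring]
    have h := ((((hfder t).sub_const (f x)).sub h2).sub h3).sub h4
    convert h using 1 <;> rfl
  have hψ0 : ψ 0 = 0 := by simp [hψ]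
  have hant : AntitoneOn ψ (Set.Icc (0:ℝ) 1) := by
    apply antitoneOn_of_deriv_nonpos (convex_Icc 0 1)
    · exact fun t _ => ((hψd t).differentiableAt).continuousAt.continuousWithinAt
    · exact fun t _ => ((hψd t).differentiableAt).differentiableWithinAt
    · intro t ht
      rw [interior_Icc] at ht
      rw [(hψd t).deriv]
      exact hφle t ⟨ht.1.le, ht.2.le⟩
  have := hant ⟨le_rfl, zero_le_one⟩ ⟨zero_le_one, le_rfl⟩ zero_le_one
  rw [hψ0] at this
  have h1 : ψ 1 ≤ 0 := this
  rw [hψ] at h1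
  simp only [one_smul, one_pow, one_mul] at h1
  linarith

/-- objective decrease of a stochastic negative-curvature step using an
inexact Hessian `H` (error `ε₃ ≤ ε₂/24`) and an inexact gradient `g`
(error `ε₄ ≤ ε₂²/(24·L2)`). -/
theorem stochastic_negative_curvature_step_decrease {d : ℕ}
    (f : EuclideanSpace ℝ (Fin d) → ℝ) (L2 ε₂ ε₃ ε₄ : ℝ)
    (hL2 : 0 < L2) (hε₂ : 0 < ε₂) (hε₂1 : ε₂ < 1)
    (hε₃0 : 0 ≤ ε₃) (hε₃ : ε₃ ≤ ε₂ / 24)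
    (hε₄0 : 0 ≤ ε₄) (hε₄ : ε₄ ≤ ε₂ ^ 2 / (24 * L2))
    (hf : ContDiff ℝ 2 f)
    (hHlip : ∀ a b : EuclideanSpace ℝ (Fin d),
      ‖fderiv ℝ (gradient f) a - fderiv ℝ (gradient f) b‖ ≤ L2 * ‖a - b‖)
    (x : EuclideanSpace ℝ (Fin d))
    (H : EuclideanSpace ℝ (Fin d) →L[ℝ] EuclideanSpace ℝ (Fin d))
    (hHsym : ∀ u w : EuclideanSpace ℝ (Fin d), ⟪H u, w⟫ = ⟪u, H w⟫)
    (hHapprox : ‖H - fderiv ℝ (gradient f) x‖ ≤ ε₃)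
    (g : EuclideanSpace ℝ (Fin d)) (hg : ‖g - gradient f x‖ ≤ ε₄)
    (v : EuclideanSpace ℝ (Fin d)) (hv : ‖v‖ = 1)
    (xp : EuclideanSpace ℝ (Fin d))
    (hxp : xp = x - ((ε₂ / L2) * sgn ⟪g, v⟫) • v) :
    f x - f xp ≥ -(ε₂ ^ 2 / (2 * L2 ^ 2)) * ⟪H v, v⟫ - 11 * ε₂ ^ 3 / (48 * L2 ^ 2) := by
  set G := gradient f with hGdef
  set Bx := fderiv ℝ (gradient f) x with hBx
  set s : ℝ := ⟪g, v⟫ with hs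
  set η : ℝ := ε₂ / L2 with hη
  have hηpos : 0 < η := div_pos hε₂ hL2
  set c : ℝ := η * sgn s with hc
  set p : EuclideanSpace ℝ (Fin d) := (-c) • v with hp
  have hxp' : xp = x + p := by
    rw [hxp, hp, neg_smul, sub_eq_add_neg]
  have hsgncases : sgn s = 1 ∨ sgn s = -1 := by
    unfold sgn; split <;> simp
  have habssgn : |sgn s| = 1 := by rcases hsgncases with h | h <;> simp [h]
  have hnp : ‖p‖ = η := by
    rw [hp, norm_smul, hv, mul_one, Real.norm_eq_abs, abs_neg, hc, abs_mul, habssgn,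
      mul_one, abs_of_pos hηpos]
  -- Taylor bound
  have htaylor := taylor_cubic f L2 hL2.le hf hHlip x p
  rw [hnp] at htaylor
  rw [hxp']
  -- gradient term bound
  have hA : ⟪G x, p⟫ ≤ η * ε₄ := by
    have e0 : sgn s * s = |s| := by
      by_cases h : 0 ≤ s
      · simp [sgn, h, abs_of_nonneg h]
      · simp [sgn, h, abs_of_neg (lt_of_not_ge h)]
    have e2 : |⟪g - G x, v⟫| ≤ ε₄ := by
      calc |⟪g - G x, v⟫| ≤ ‖g - G x‖ * ‖v‖ := abs_real_inner_le_norm _ _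
        _ ≤ ε₄ := by rw [hv, mul_one]; exact hg
    have e3 : sgn s * ⟪g - G x, v⟫ ≤ ε₄ := by
      rcases hsgncases with h | h <;> rw [h] <;>
        [simpa using (abs_le.mp e2).2; simpa using neg_le_of_neg_le (abs_le.mp e2).1]
    have e4 : sgn s * ⟪G x, v⟫ ≥ -ε₄ := by
      have : sgn s * ⟪G x, v⟫ = sgn s * s - sgn s * ⟪g - G x, v⟫ := by
        rw [inner_sub_left]; ring
      rw [this, e0]
      have := abs_nonneg s
      linarith
    have e5 : ⟪G x, p⟫ = -(η * (sgn s * ⟪G x, v⟫)) := by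
      rw [hp, real_inner_smul_right, hc]; ring
    rw [e5]
    have := mul_le_mul_of_nonneg_left e4 hηpos.le
    nlinarith
  -- Hessian term bound
  set T : ℝ := ⟪H v, v⟫ with hT
  have hBvv : ⟪Bx v, v⟫ ≤ T + ε₃ := by
    have e1 : |⟪(H - Bx) v, v⟫| ≤ ε₃ := by
      calc |⟪(H - Bx) v, v⟫| ≤ ‖(H - Bx) v‖ * ‖v‖ := abs_real_inner_le_norm _ _
        _ ≤ ‖H - Bx‖ * ‖v‖ * ‖v‖ :=
            mul_le_mul_of_nonneg_right ((H - Bx).le_opNorm v) (norm_nonneg v)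
        _ ≤ ε₃ := by rw [hv, mul_one, mul_one]; exact hHapprox
    have e2 : ⟪(H - Bx) v, v⟫ = T - ⟪Bx v, v⟫ := by
      rw [ContinuousLinearMap.sub_apply, inner_sub_left]
    have := (abs_le.mp e1).1
    rw [e2] at this
    linarith
  have hcsq : c ^ 2 = η ^ 2 := by
    rw [hc, mul_pow]
    rcases hsgncases with h | h <;> rw [h] <;> ring
  have hB : ⟪Bx p, p⟫ ≤ η ^ 2 * (T + ε₃) := by
    have e1 : ⟪Bx p, p⟫ = c ^ 2 * ⟪Bx v, v⟫ := by
      rw [hp, map_smul, real_inner_smul_left, real_inner_smul_right]; ring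
    rw [e1, hcsq]
    have := mul_le_mul_of_nonneg_left hBvv (sq_nonneg η)
    linarith
  -- arithmetic
  set D : ℝ := ε₂ ^ 3 / L2 ^ 2 with hD
  have hL2ne : L2 ≠ 0 := hL2.ne'
  have h1 : η * ε₄ ≤ D / 24 := by
    have : η * ε₄ ≤ η * (ε₂ ^ 2 / (24 * L2)) := mul_le_mul_of_nonneg_left hε₄ hηpos.le
    have e : η * (ε₂ ^ 2 / (24 * L2)) = D / 24 := by
      rw [hη, hD]; field_simp
    linarith
  have h2 : η ^ 2 * ε₃ ≤ D / 24 := by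
    have : η ^ 2 * ε₃ ≤ η ^ 2 * (ε₂ / 24) := mul_le_mul_of_nonneg_left hε₃ (sq_nonneg η)
    have e : η ^ 2 * (ε₂ / 24) = D / 24 := by
      rw [hη, hD]; field_simp
    linarith
  have h3 : L2 * η ^ 3 = D := by rw [hη, hD]; field_simp
  have h4T : η ^ 2 * T = ε₂ ^ 2 / L2 ^ 2 * T := by rw [hη]; field_simp
  have hgoal : -(ε₂ ^ 2 / (2 * L2 ^ 2)) * T - 11 * ε₂ ^ 3 / (48 * L2 ^ 2)
      = -(ε₂ ^ 2 / L2 ^ 2 * T) / 2 - 11 * D / 48 := by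
    rw [hD]; ring
  rw [hgoal]
  have hB' : ⟪Bx p, p⟫ ≤ η ^ 2 * T + η ^ 2 * ε₃ := by rw [mul_add] at hB; exact hB
  linarith [htaylor, hA, hB', h1, h2, h3, h4T]
end

section
/- Let f : ℝ^d → ℝ be twice continuously differentiable with L1-Lipschitz gradient and L2-Lipschitz Hessian, let α ∈ (0,1], ε₁ ∈ (0,1), ε₂ = ε₁^α, and let x₀ satisfy f(x₀) − inf f ≤ Δ < ∞. Suppose x₁ = x₀, and for every j there are: a vector g_j with ‖g_j − ∇f(x_j)‖ ≤ ε₄ where 0 ≤ ε₄ ≤ min(ε₁/(2√2), ε₂²/(24·L2)); a symmetric matrix H_j with ‖H_j − ∇²f(x_j)‖₂ ≤ ε₃ where 0 ≤ ε₃ ≤ ε₂/24; and a unit vector v_j with λ_min(H_j) ≥ v_jᵀH_j v_j − max(ε₂, ‖g_j‖^α)/2. The update is: x_{j+1} = x_j − (ε₂/L2)·sign(v_jᵀg_j)·v_j if −(ε₂²/(2·L2²))·v_jᵀH_j v_j − 11·ε₂³/(48·L2²) > ‖g_j‖²/(4·L1) − ε₁²/(8·L1), and x_{j+1} = x_j −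 (1/L1)·g_j otherwise. Then the first index j* with v_{j*}ᵀH_{j*}v_{j*} > −ε₂/2 and ‖g_{j*}‖ ≤ ε₁ satisfies j* ≤ 1 + max(48·L2²/ε₂³, 8·L1/ε₁²)·Δ, and at termination ‖∇f(x_{j*})‖ ≤ 2·ε₁ and λ_min(∇²f(x_{j*})) ≥ −2·ε₂. -/
open scoped RealInnerProductSpace

section Helpers

variable {E : Type*} [NormedAddCommGroup E] [InnerProductSpace ℝ E] [CompleteSpace E]

lemma line_deriv1 (f : E → ℝ) (hf : ContDiff ℝ 2 f) (y u : E) (t : ℝ) :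
    HasDerivAt (fun s : ℝ => f (y + s • u)) ⟪gradient f (y + t • u), u⟫ t := by
  have hc : HasDerivAt (fun s : ℝ => y + s • u) u t := by
    simpa using ((hasDerivAt_id t).smul_const u).const_add y
  have hd : DifferentiableAt ℝ f (y + t • u) := (hf.differentiable (by norm_num)) _
  have h := (hd.hasFDerivAt).comp_hasDerivAt t hc
  have : fderiv ℝ f (y + t • u) u = ⟪gradient f (y + t • u), u⟫ := by
    have h2 := hd.hasGradientAt
    rw [hasGradientAt_iff_hasFDerivAt] at h2
    rw [h2.fderiv]; simp [InnerProductSpace.toDual_apply_apply]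
  rwa [this] at h

lemma grad_contDiff (f : E → ℝ) (hf : ContDiff ℝ 2 f) : ContDiff ℝ 1 (gradient f) := by
  have : gradient f = fun z => (InnerProductSpace.toDual ℝ E).symm (fderiv ℝ f z) := rfl
  rw [this]
  exact (InnerProductSpace.toDual ℝ E).symm.contDiff.comp (hf.fderiv_right (by norm_num))

lemma line_deriv2 (f : E → ℝ) (hf : ContDiff ℝ 2 f) (y u : E) (t : ℝ) :
    HasDerivAt (fun s : ℝ => ⟪gradient f (y + s • u), u⟫)
      ⟪(fderiv ℝ (gradient f) (y + t • u)) u, u⟫ t := by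
  have hg : Differentiable ℝ (gradient f) :=
    (grad_contDiff f hf).differentiable (by norm_num)
  have hc : HasDerivAt (fun s : ℝ => y + s • u) u t := by
    simpa using ((hasDerivAt_id t).smul_const u).const_add y
  have h := ((hg (y + t • u)).hasFDerivAt).comp_hasDerivAt t hc
  have := h.inner ℝ (hasDerivAt_const t u)
  simpa using this

/-- Descent lemma. -/
lemma quad_bound (f : E → ℝ) (hf : ContDiff ℝ 2 f) (L1 : ℝ)
    (hglip : ∀ a b : E, ‖gradient f a - gradient f b‖ ≤ L1 * ‖a - b‖)
    (y u : E) :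
    f (y + u) ≤ f y + ⟪gradient f y, u⟫ + L1 / 2 * ‖u‖ ^ 2 := by
  have hcontg : Continuous (gradient f) :=
    ((grad_contDiff f hf).continuous)
  have hψcont : Continuous (fun t : ℝ => ⟪gradient f (y + t • u), u⟫) := by
    exact (hcontg.comp (by continuity)).inner continuous_const
  have key : f (y + u) - f y = ∫ t in (0:ℝ)..1, ⟪gradient f (y + t • u), u⟫ := by
    have := intervalIntegral.integral_eq_sub_of_hasDerivAt
      (f := fun s : ℝ => f (y + s • u))
      (f' := fun t => ⟪gradient f (y + t • u), u⟫)
      (a := 0) (b := 1)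
      (fun t _ => line_deriv1 f hf y u t)
      (hψcont.intervalIntegrable 0 1)
    simp only [one_smul, zero_smul, add_zero] at this
    rw [this]
  have bnd : ∀ t ∈ Set.Icc (0:ℝ) 1,
      ⟪gradient f (y + t • u), u⟫ ≤ ⟪gradient f y, u⟫ + L1 * t * ‖u‖ ^ 2 := by
    intro t ht
    have h1 : ⟪gradient f (y + t • u) - gradient f y, u⟫ ≤ L1 * t * ‖u‖ ^ 2 := by
      calc ⟪gradient f (y + t • u) - gradient f y, u⟫
          ≤ ‖gradient f (y + t • u) - gradient f y‖ * ‖u‖ := real_inner_le_norm _ _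
        _ ≤ (L1 * ‖(y + t • u) - y‖) * ‖u‖ := by
            gcongr; exact hglip _ _
        _ = L1 * t * ‖u‖ ^ 2 := by
            rw [show (y + t • u) - y = t • u by abel, norm_smul,
              Real.norm_eq_abs, abs_of_nonneg ht.1]; ring
    have := inner_sub_left (𝕜 := ℝ) (gradient f (y + t • u)) (gradient f y) u
    linarith [this ▸ h1]
  have hint : ∫ t in (0:ℝ)..1, ⟪gradient f (y + t • u), u⟫
      ≤ ∫ t in (0:ℝ)..1, (⟪gradient f y, u⟫ + L1 * t * ‖u‖ ^ 2) := by
    apply intervalIntegral.integral_mono_on (by norm_num)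
      (hψcont.intervalIntegrable 0 1)
      ((by continuity : Continuous fun t : ℝ => (⟪gradient f y, u⟫ + L1 * t * ‖u‖ ^ 2)).intervalIntegrable 0 1)
    exact bnd
  have hval : ∫ t in (0:ℝ)..1, (⟪gradient f y, u⟫ + L1 * t * ‖u‖ ^ 2)
      = ⟪gradient f y, u⟫ + L1 / 2 * ‖u‖ ^ 2 := by
    rw [intervalIntegral.integral_add
      ((continuous_const).intervalIntegrable 0 1)
      ((by continuity : Continuous fun t : ℝ => L1 * t * ‖u‖ ^ 2).intervalIntegrable 0 1)]
    have : ∀ t : ℝ, L1 * t * ‖u‖ ^ 2 = (L1 * ‖u‖ ^ 2) * t := fun t => by ring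
    have h2 : ∫ t in (0:ℝ)..1, L1 * t * ‖u‖ ^ 2 = L1 / 2 * ‖u‖ ^ 2 := by
      simp only [this]
      rw [intervalIntegral.integral_const_mul, integral_id]
      ring
    rw [h2]
    simp
  linarith [key ▸ (hval ▸ hint)]

/-- Cubic Taylor bound from Lipschitz Hessian. -/
lemma cubic_bound (f : E → ℝ) (hf : ContDiff ℝ 2 f) (L2 : ℝ)
    (hHlip : ∀ a b : E, ‖fderiv ℝ (gradient f) a - fderiv ℝ (gradient f) b‖ ≤ L2 * ‖a - b‖)
    (y u : E) :
    f (y + u) ≤ f y + ⟪gradient f y, u⟫ + 1 / 2 * ⟪(fderiv ℝ (gradient f) y) u, u⟫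
      + L2 / 6 * ‖u‖ ^ 3 := by
  set B := fderiv ℝ (gradient f) y with hB
  set Q : ℝ := ⟪B u, u⟫ with hQ
  have hcontg : Continuous (gradient f) := (grad_contDiff f hf).continuous
  have hψcont : Continuous (fun t : ℝ => ⟪gradient f (y + t • u), u⟫) :=
    (hcontg.comp (by continuity)).inner continuous_const
  have hcontF : Continuous (fderiv ℝ (gradient f)) :=
    (grad_contDiff f hf).continuous_fderiv (by norm_num)
  have hχcont : Continuous (fun s : ℝ => ⟪(fderiv ℝ (gradient f) (y + s • u)) u, u⟫) := by
    have h1 : Continuous (fun s : ℝ => (fderiv ℝ (gradient f) (y + s • u)) u) :=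
      ((ContinuousLinearMap.apply ℝ E u).continuous).comp (hcontF.comp (by continuity))
    exact h1.inner continuous_const
  -- step 1 : bound on ψ
  have step1 : ∀ t ∈ Set.Icc (0:ℝ) 1,
      ⟪gradient f (y + t • u), u⟫ ≤ ⟪gradient f y, u⟫ + t * Q + L2 * ‖u‖ ^ 3 * t ^ 2 / 2 := by
    intro t ht
    have key : ⟪gradient f (y + t • u), u⟫ - ⟪gradient f (y + (0:ℝ) • u), u⟫
        = ∫ s in (0:ℝ)..t, ⟪(fderiv ℝ (gradient f) (y + s • u)) u, u⟫ := by
      rw [intervalIntegral.integral_eq_sub_of_hasDerivAt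
        (fun s _ => line_deriv2 f hf y u s) (hχcont.intervalIntegrable 0 t)]
    have bnd : ∀ s ∈ Set.Icc (0:ℝ) t,
        ⟪(fderiv ℝ (gradient f) (y + s • u)) u, u⟫ ≤ Q + L2 * ‖u‖ ^ 3 * s := by
      intro s hs
      have h1 : ⟪(fderiv ℝ (gradient f) (y + s • u)) u - B u, u⟫ ≤ L2 * ‖u‖ ^ 3 * s := by
        calc ⟪(fderiv ℝ (gradient f) (y + s • u)) u - B u, u⟫
            = ⟪(fderiv ℝ (gradient f) (y + s • u) - B) u, u⟫ := by
              simp [ContinuousLinearMap.sub_apply]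
          _ ≤ ‖(fderiv ℝ (gradient f) (y + s • u) - B) u‖ * ‖u‖ := real_inner_le_norm _ _
          _ ≤ ‖fderiv ℝ (gradient f) (y + s • u) - B‖ * ‖u‖ * ‖u‖ := by
              have := ContinuousLinearMap.le_opNorm
                (fderiv ℝ (gradient f) (y + s • u) - B) u
              exact mul_le_mul_of_nonneg_right this (norm_nonneg u)
          _ ≤ (L2 * ‖(y + s • u) - y‖) * ‖u‖ * ‖u‖ := by
              have := hHlip (y + s • u) y
              exact mul_le_mul_of_nonneg_right
                (mul_le_mul_of_nonneg_right this (norm_nonneg u)) (norm_nonneg u)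
          _ = L2 * ‖u‖ ^ 3 * s := by
              rw [show (y + s • u) - y = s • u by abel, norm_smul,
                Real.norm_eq_abs, abs_of_nonneg hs.1]; ring
      have h2 := inner_sub_left (𝕜 := ℝ) ((fderiv ℝ (gradient f) (y + s • u)) u) (B u) u
      linarith [h2 ▸ h1]
    have hint : ∫ s in (0:ℝ)..t, ⟪(fderiv ℝ (gradient f) (y + s • u)) u, u⟫
        ≤ ∫ s in (0:ℝ)..t, (Q + L2 * ‖u‖ ^ 3 * s) := by
      apply intervalIntegral.integral_mono_on ht.1 (hχcont.intervalIntegrable 0 t)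
        ((by fun_prop : Continuous fun s : ℝ => Q + L2 * ‖u‖ ^ 3 * s).intervalIntegrable 0 t)
      exact bnd
    have hval : ∫ s in (0:ℝ)..t, (Q + L2 * ‖u‖ ^ 3 * s) = t * Q + L2 * ‖u‖ ^ 3 * t ^ 2 / 2 := by
      rw [intervalIntegral.integral_add ((continuous_const).intervalIntegrable 0 t)
        ((by fun_prop : Continuous fun s : ℝ => L2 * ‖u‖ ^ 3 * s).intervalIntegrable 0 t),
        intervalIntegral.integral_const_mul, integral_id, intervalIntegral.integral_const]
      simp; ring
    have hz : (0:ℝ) • u = 0 := by simp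
    have := key
    rw [hz] at this
    simp only [add_zero] at this
    linarith [hval ▸ hint]
  -- step 2 : integrate ψ
  have key : f (y + u) - f y = ∫ t in (0:ℝ)..1, ⟪gradient f (y + t • u), u⟫ := by
    have := intervalIntegral.integral_eq_sub_of_hasDerivAt
      (f := fun s : ℝ => f (y + s • u))
      (f' := fun t => ⟪gradient f (y + t • u), u⟫)
      (a := 0) (b := 1)
      (fun t _ => line_deriv1 f hf y u t)
      (hψcont.intervalIntegrable 0 1)
    simp only [one_smul, zero_smul, add_zero] at this
    rw [this]
  have hint : ∫ t in (0:ℝ)..1, ⟪gradient f (y + t • u), u⟫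
      ≤ ∫ t in (0:ℝ)..1, (⟪gradient f y, u⟫ + t * Q + L2 * ‖u‖ ^ 3 * t ^ 2 / 2) := by
    apply intervalIntegral.integral_mono_on (by norm_num) (hψcont.intervalIntegrable 0 1)
      ((by fun_prop : Continuous fun t : ℝ =>
        ⟪gradient f y, u⟫ + t * Q + L2 * ‖u‖ ^ 3 * t ^ 2 / 2).intervalIntegrable 0 1)
    exact step1
  have hval : ∫ t in (0:ℝ)..1, (⟪gradient f y, u⟫ + t * Q + L2 * ‖u‖ ^ 3 * t ^ 2 / 2)
      = ⟪gradient f y, u⟫ + 1 / 2 * Q + L2 / 6 * ‖u‖ ^ 3 := by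
    have e1 : ∀ t : ℝ, ⟪gradient f y, u⟫ + t * Q + L2 * ‖u‖ ^ 3 * t ^ 2 / 2
        = ⟪gradient f y, u⟫ + Q * t + (L2 * ‖u‖ ^ 3 / 2) * t ^ 2 := fun t => by ring
    simp only [e1]
    rw [intervalIntegral.integral_add
        ((by fun_prop : Continuous fun t : ℝ => ⟪gradient f y, u⟫ + Q * t).intervalIntegrable 0 1)
      ((by fun_prop : Continuous fun t : ℝ => (L2 * ‖u‖ ^ 3 / 2) * t ^ 2).intervalIntegrable 0 1),
      intervalIntegral.integral_add ((continuous_const).intervalIntegrable 0 1)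
        ((by fun_prop : Continuous fun t : ℝ => Q * t).intervalIntegrable 0 1),
      intervalIntegral.integral_const_mul, intervalIntegral.integral_const_mul,
      integral_id, integral_pow, intervalIntegral.integral_const]
    simp; ring
  linarith [key ▸ (hval ▸ hint)]

lemma qdiff (A C : E →L[ℝ] E) (u : E) (hu : ‖u‖ = 1) :
    |⟪A u, u⟫ - ⟪C u, u⟫| ≤ ‖A - C‖ := by
  have e : ⟪A u, u⟫ - ⟪C u, u⟫ = ⟪(A - C) u, u⟫ := by
    simp [ContinuousLinearMap.sub_apply, inner_sub_left]
  rw [e]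
  calc |⟪(A - C) u, u⟫| ≤ ‖(A - C) u‖ * ‖u‖ := abs_real_inner_le_norm _ _
    _ ≤ (‖A - C‖ * ‖u‖) * ‖u‖ := by
        exact mul_le_mul_of_nonneg_right (ContinuousLinearMap.le_opNorm _ _) (norm_nonneg u)
    _ = ‖A - C‖ := by rw [hu]; ring

lemma smul_quad (B : E →L[ℝ] E) (c : ℝ) (w : E) :
    ⟪B (c • w), c • w⟫ = c ^ 2 * ⟪B w, w⟫ := by
  rw [map_smul, real_inner_smul_left, real_inner_smul_right]; ring

end Helpers

set_option maxHeartbeats 2000000 in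
/-- Theorem on SNCG: convergence guarantee of the stochastic NCG algorithm,
using sub-sampled gradients `g_j` and sub-sampled Hessians `H_j`. -/
theorem SNCG_guarantee {d : ℕ}
    (f : EuclideanSpace ℝ (Fin d) → ℝ) (L1 L2 α ε₁ ε₂ ε₃ ε₄ Δ : ℝ)
    (hL1 : 0 < L1) (hL2 : 0 < L2)
    (hα : 0 < α) (hα1 : α ≤ 1)
    (hε₁ : 0 < ε₁) (hε₁1 : ε₁ < 1)
    (hε₂ : ε₂ = ε₁ ^ α)
    (hε₃0 : 0 ≤ ε₃) (hε₃ : ε₃ ≤ ε₂ / 24)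
    (hε₄0 : 0 ≤ ε₄) (hε₄ : ε₄ ≤ min (ε₁ / (2 * Real.sqrt 2)) (ε₂ ^ 2 / (24 * L2)))
    (hf : ContDiff ℝ 2 f)
    (hglip : ∀ a b : EuclideanSpace ℝ (Fin d),
      ‖gradient f a - gradient f b‖ ≤ L1 * ‖a - b‖)
    (hHlip : ∀ a b : EuclideanSpace ℝ (Fin d),
      ‖fderiv ℝ (gradient f) a - fderiv ℝ (gradient f) b‖ ≤ L2 * ‖a - b‖)
    (x₀ : EuclideanSpace ℝ (Fin d))
    (hΔ : ∀ z : EuclideanSpace ℝ (Fin d), f x₀ - f z ≤ Δ)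
    (x v g : ℕ → EuclideanSpace ℝ (Fin d))
    (H : ℕ → EuclideanSpace ℝ (Fin d) →L[ℝ] EuclideanSpace ℝ (Fin d))
    (hx1 : x 1 = x₀)
    (hg : ∀ j : ℕ, 1 ≤ j → ‖g j - gradient f (x j)‖ ≤ ε₄)
    (hHsym : ∀ j : ℕ, 1 ≤ j → ∀ u w : EuclideanSpace ℝ (Fin d),
      ⟪(H j) u, w⟫ = ⟪u, (H j) w⟫)
    (hHapprox : ∀ j : ℕ, 1 ≤ j → ‖H j - fderiv ℝ (gradient f) (x j)‖ ≤ ε₃)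
    (hv : ∀ j : ℕ, 1 ≤ j → ‖v j‖ = 1)
    (hmin : ∀ j : ℕ, 1 ≤ j → ∀ u : EuclideanSpace ℝ (Fin d), ‖u‖ = 1 →
      ⟪(H j) u, u⟫ ≥ ⟪(H j) (v j), v j⟫ - max ε₂ (‖g j‖ ^ α) / 2)
    (hupd : ∀ j : ℕ, 1 ≤ j →
      x (j + 1) =
        if -(ε₂ ^ 2 / (2 * L2 ^ 2)) * ⟪(H j) (v j), v j⟫ - 11 * ε₂ ^ 3 / (48 * L2 ^ 2) >
            ‖g j‖ ^ 2 / (4 * L1) - ε₁ ^ 2 / (8 * L1) then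
          x j - ((ε₂ / L2) * sgn ⟪g j, v j⟫) • v j
        else
          x j - (1 / L1) • g j) :
    ∃ jstar : ℕ, 1 ≤ jstar ∧
      (⟪(H jstar) (v jstar), v jstar⟫ > -ε₂ / 2 ∧ ‖g jstar‖ ≤ ε₁) ∧
      (∀ i : ℕ, 1 ≤ i → i < jstar →
        ¬(⟪(H i) (v i), v i⟫ > -ε₂ / 2 ∧ ‖g i‖ ≤ ε₁)) ∧
      (jstar : ℝ) ≤ 1 + max (48 * L2 ^ 2 / ε₂ ^ 3) (8 * L1 / ε₁ ^ 2) * Δ ∧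
      ‖gradient f (x jstar)‖ ≤ 2 * ε₁ ∧
      ∀ u : EuclideanSpace ℝ (Fin d), ‖u‖ = 1 →
        ⟪(fderiv ℝ (gradient f) (x jstar)) u, u⟫ ≥ -(2 * ε₂) := by
  classical
  have hε₂pos : 0 < ε₂ := by rw [hε₂]; exact Real.rpow_pos_of_pos hε₁ α
  have hε₄a : ε₄ ≤ ε₁ / (2 * Real.sqrt 2) := le_trans hε₄ (min_le_left _ _)
  have hε₄b : ε₄ ≤ ε₂ ^ 2 / (24 * L2) := le_trans hε₄ (min_le_right _ _)
  have hsqrt2 : Real.sqrt 2 ^ 2 = 2 := Real.sq_sqrt (by norm_num)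
  have hsqrt2_pos : 0 < Real.sqrt 2 := Real.sqrt_pos.mpr (by norm_num)
  have hsqrt2_ge1 : 1 ≤ Real.sqrt 2 := by
    nlinarith [hsqrt2, hsqrt2_pos]
  have hε₄sq : ε₄ ^ 2 ≤ ε₁ ^ 2 / 8 := by
    have h1 : ε₄ ^ 2 ≤ (ε₁ / (2 * Real.sqrt 2)) ^ 2 := by
      apply pow_le_pow_left₀ hε₄0 hε₄a
    have h2 : (ε₁ / (2 * Real.sqrt 2)) ^ 2 = ε₁ ^ 2 / 8 := by
      rw [div_pow, mul_pow, hsqrt2]; norm_num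
    linarith
  have hε₄ε₁ : ε₄ ≤ ε₁ := le_trans hε₄a (by
    apply div_le_self hε₁.le; nlinarith [hsqrt2_ge1])
  set δ : ℝ := min (ε₂ ^ 3 / (48 * L2 ^ 2)) (ε₁ ^ 2 / (8 * L1)) with hδ
  have hδ1 : δ ≤ ε₂ ^ 3 / (48 * L2 ^ 2) := min_le_left _ _
  have hδ2 : δ ≤ ε₁ ^ 2 / (8 * L1) := min_le_right _ _
  have hδpos : 0 < δ := lt_min (by positivity) (by positivity)
  -- per-step decrease
  have step : ∀ j : ℕ, 1 ≤ j →
      ¬(⟪(H j) (v j), v j⟫ > -ε₂ / 2 ∧ ‖g j‖ ≤ ε₁) →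
      f (x (j + 1)) ≤ f (x j) - δ := by
    intro j hj hT
    have hjx := hupd j hj
    have hw : ‖v j‖ = 1 := hv j hj
    have hgj : ‖g j - gradient f (x j)‖ ≤ ε₄ := hg j hj
    have hHj : ‖H j - fderiv ℝ (gradient f) (x j)‖ ≤ ε₃ := hHapprox j hj
    by_cases hcond : -(ε₂ ^ 2 / (2 * L2 ^ 2)) * ⟪(H j) (v j), v j⟫ - 11 * ε₂ ^ 3 / (48 * L2 ^ 2) >
        ‖g j‖ ^ 2 / (4 * L1) - ε₁ ^ 2 / (8 * L1)
    · -- negative curvature step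
      rw [if_pos hcond] at hjx
      set s := sgn ⟪g j, v j⟫ with hs
      have hs2 : s ^ 2 = 1 := by rw [hs]; unfold sgn; split <;> norm_num
      have hsabs : |s| = 1 := by rw [hs]; unfold sgn; split <;> norm_num
      have hsg : 0 ≤ s * ⟪g j, v j⟫ := by
        rw [hs]; unfold sgn; split
        · rename_i hcase; simpa using hcase
        · rename_i hcase
          have hcase' : (⟪g j, v j⟫ : ℝ) < 0 := not_le.mp hcase
          nlinarith [hcase']
      set η := ε₂ / L2 with hη
      have hηpos : 0 < η := by positivity
      have hu : x (j + 1) = x j + (-(η * s)) • v j := by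
        rw [hjx, sub_eq_add_neg, ← neg_smul]
      have hcb := cubic_bound f hf L2 hHlip (x j) ((-(η * s)) • v j)
      rw [← hu] at hcb
      have hnorm : ‖(-(η * s)) • v j‖ = η := by
        rw [norm_smul, hw, mul_one, Real.norm_eq_abs, abs_neg, abs_mul, hsabs,
          abs_of_pos hηpos, mul_one]
      have hterm1 : ⟪gradient f (x j), (-(η * s)) • v j⟫ ≤ η * ε₄ := by
        rw [real_inner_smul_right]
        have h2 : s * ⟪gradient f (x j), v j⟫
            = s * ⟪g j, v j⟫ - s * ⟪g j - gradient f (x j), v j⟫ := by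
          rw [inner_sub_left]; ring
        have h3 : |(⟪g j - gradient f (x j), v j⟫ : ℝ)| ≤ ε₄ := by
          calc |(⟪g j - gradient f (x j), v j⟫ : ℝ)|
              ≤ ‖g j - gradient f (x j)‖ * ‖v j‖ := abs_real_inner_le_norm _ _
            _ ≤ ε₄ := by rw [hw, mul_one]; exact hgj
        have h4 : s * ⟪g j - gradient f (x j), v j⟫ ≤ ε₄ := by
          calc s * ⟪g j - gradient f (x j), v j⟫
              ≤ |s * ⟪g j - gradient f (x j), v j⟫| := le_abs_self _
            _ = |s| * |(⟪g j - gradient f (x j), v j⟫ : ℝ)| := abs_mul _ _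
            _ ≤ ε₄ := by rw [hsabs, one_mul]; exact h3
        have h1 : s * ⟪gradient f (x j), v j⟫ ≥ -ε₄ := by
          rw [h2]; linarith
        have h9 : η * (-(s * ⟪gradient f (x j), v j⟫)) ≤ η * ε₄ :=
          mul_le_mul_of_nonneg_left (by linarith) hηpos.le
        linarith [h9]
      have hterm2 : ⟪(fderiv ℝ (gradient f) (x j)) ((-(η * s)) • v j), (-(η * s)) • v j⟫
          ≤ η ^ 2 * (⟪(H j) (v j), v j⟫ + ε₃) := by
        have e : ⟪(fderiv ℝ (gradient f) (x j)) ((-(η * s)) • v j), (-(η * s)) • v j⟫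
            = (η * s) ^ 2 * ⟪(fderiv ℝ (gradient f) (x j)) (v j), v j⟫ := by
          rw [smul_quad]; ring_nf
        rw [e, mul_pow, hs2, mul_one]
        have h5 : ⟪(fderiv ℝ (gradient f) (x j)) (v j), v j⟫ ≤ ⟪(H j) (v j), v j⟫ + ε₃ := by
          have h6 : |⟪(H j) (v j), v j⟫ - ⟪(fderiv ℝ (gradient f) (x j)) (v j), v j⟫| ≤ ε₃ :=
            le_trans (qdiff (H j) (fderiv ℝ (gradient f) (x j)) (v j) hw) hHj
          have h7 := (abs_le.mp h6).1
          linarith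
        exact mul_le_mul_of_nonneg_left h5 (sq_nonneg η)
      have hD : f (x (j + 1)) ≤ f (x j) + η * ε₄
          + 1 / 2 * (η ^ 2 * (⟪(H j) (v j), v j⟫ + ε₃)) + L2 / 6 * η ^ 3 := by
        rw [hnorm] at hcb
        linarith
      have hnum : η * ε₄ + η ^ 2 * ε₃ / 2 + L2 / 6 * η ^ 3 ≤ 11 * ε₂ ^ 3 / (48 * L2 ^ 2) := by
        have e1 : η * ε₄ ≤ ε₂ ^ 3 / (24 * L2 ^ 2) := by
          have ha : η * ε₄ ≤ η * (ε₂ ^ 2 / (24 * L2)) :=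
            mul_le_mul_of_nonneg_left hε₄b hηpos.le
          have hb : η * (ε₂ ^ 2 / (24 * L2)) = ε₂ ^ 3 / (24 * L2 ^ 2) := by
            rw [hη]; field_simp
          linarith
        have e2 : η ^ 2 * ε₃ / 2 ≤ ε₂ ^ 3 / (48 * L2 ^ 2) := by
          have ha : η ^ 2 * ε₃ ≤ η ^ 2 * (ε₂ / 24) :=
            mul_le_mul_of_nonneg_left hε₃ (sq_nonneg η)
          have hb : η ^ 2 * (ε₂ / 24) = ε₂ ^ 3 / (24 * L2 ^ 2) := by
            rw [hη]; field_simp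
          have hc : ε₂ ^ 3 / (24 * L2 ^ 2) / 2 = ε₂ ^ 3 / (48 * L2 ^ 2) := by ring
          linarith
        have e4 : L2 / 6 * η ^ 3 = ε₂ ^ 3 / (6 * L2 ^ 2) := by
          rw [hη]; field_simp
        rw [e4]
        have : ε₂ ^ 3 / (24 * L2 ^ 2) + ε₂ ^ 3 / (48 * L2 ^ 2) + ε₂ ^ 3 / (6 * L2 ^ 2)
            = 11 * ε₂ ^ 3 / (48 * L2 ^ 2) := by field_simp; ring
        linarith
      have hη2 : η ^ 2 = ε₂ ^ 2 / L2 ^ 2 := by rw [hη, div_pow]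
      have hDge : f (x j) - f (x (j + 1))
          ≥ -(ε₂ ^ 2 / (2 * L2 ^ 2)) * ⟪(H j) (v j), v j⟫ - 11 * ε₂ ^ 3 / (48 * L2 ^ 2) := by
        have e5 : 1 / 2 * (η ^ 2 * (⟪(H j) (v j), v j⟫ + ε₃))
            = η ^ 2 * ε₃ / 2 + (ε₂ ^ 2 / (2 * L2 ^ 2)) * ⟪(H j) (v j), v j⟫ := by
          rw [hη2]; ring
        rw [e5] at hD
        linarith [hD, hnum]
      rcases not_and_or.mp hT with hC | hG
      · push_neg at hC
        have h7 : -(ε₂ ^ 2 / (2 * L2 ^ 2)) * ⟪(H j) (v j), v j⟫ - 11 * ε₂ ^ 3 / (48 * L2 ^ 2)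
            ≥ ε₂ ^ 3 / (48 * L2 ^ 2) := by
          have hA := mul_le_mul_of_nonneg_left hC
            (by positivity : (0:ℝ) ≤ ε₂ ^ 2 / (2 * L2 ^ 2))
          have hB : (ε₂ ^ 2 / (2 * L2 ^ 2)) * (-ε₂ / 2) = -(ε₂ ^ 3 / (4 * L2 ^ 2)) := by ring
          have hCc : ε₂ ^ 3 / (4 * L2 ^ 2) - 11 * ε₂ ^ 3 / (48 * L2 ^ 2)
              = ε₂ ^ 3 / (48 * L2 ^ 2) := by ring
          linarith [hA, hB ▸ hA]
        linarith
      · push_neg at hG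
        have h7 : ‖g j‖ ^ 2 ≥ ε₁ ^ 2 := pow_le_pow_left₀ hε₁.le hG.le 2
        have h8 : ‖g j‖ ^ 2 / (4 * L1) - ε₁ ^ 2 / (8 * L1) ≥ ε₁ ^ 2 / (8 * L1) := by
          have : ‖g j‖ ^ 2 / (4 * L1) ≥ ε₁ ^ 2 / (4 * L1) := by
            apply div_le_div_of_nonneg_right h7 (by positivity) |>.trans_eq rfl
          have e : ε₁ ^ 2 / (4 * L1) = 2 * (ε₁ ^ 2 / (8 * L1)) := by field_simp; ring
          linarith [this, e ▸ this]
        linarith [hcond, hDge]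
    · -- gradient step
      rw [if_neg hcond] at hjx
      have hu : x (j + 1) = x j + (-(1 / L1)) • g j := by
        rw [hjx, sub_eq_add_neg, ← neg_smul]
      have hqb := quad_bound f hf L1 hglip (x j) ((-(1 / L1)) • g j)
      rw [← hu] at hqb
      have hnorm : ‖(-(1 / L1)) • g j‖ ^ 2 = ‖g j‖ ^ 2 / L1 ^ 2 := by
        rw [norm_smul, Real.norm_eq_abs, abs_neg, abs_of_pos (by positivity : (0:ℝ) < 1 / L1),
          mul_pow, div_pow, one_pow]
        ring
      have hterm1 : ⟪gradient f (x j), (-(1 / L1)) • g j⟫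
          ≤ -(1 / L1) * (‖g j‖ ^ 2 - ε₄ * ‖g j‖) := by
        rw [real_inner_smul_right]
        have h2 : (⟪gradient f (x j), g j⟫ : ℝ)
            = ‖g j‖ ^ 2 - ⟪g j - gradient f (x j), g j⟫ := by
          rw [inner_sub_left, real_inner_self_eq_norm_sq]; ring
        have h3 : (⟪g j - gradient f (x j), g j⟫ : ℝ) ≤ ε₄ * ‖g j‖ := by
          calc (⟪g j - gradient f (x j), g j⟫ : ℝ)
              ≤ ‖g j - gradient f (x j)‖ * ‖g j‖ := real_inner_le_norm _ _
            _ ≤ ε₄ * ‖g j‖ := mul_le_mul_of_nonneg_right hgj (norm_nonneg _)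
        have h1 : (⟪gradient f (x j), g j⟫ : ℝ) ≥ ‖g j‖ ^ 2 - ε₄ * ‖g j‖ := by
          rw [h2]; linarith
        have h9 : (1 / L1) * (‖g j‖ ^ 2 - ε₄ * ‖g j‖)
            ≤ (1 / L1) * ⟪gradient f (x j), g j⟫ :=
          mul_le_mul_of_nonneg_left h1 (by positivity)
        linarith [h9]
      have key : f (x j) - f (x (j + 1)) ≥ ‖g j‖ ^ 2 / (4 * L1) - ε₁ ^ 2 / (8 * L1) := by
        rw [hnorm] at hqb
        have h9 : f (x (j + 1)) ≤ f (x j) - (1 / L1) * (‖g j‖ ^ 2 - ε₄ * ‖g j‖)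
            + L1 / 2 * (‖g j‖ ^ 2 / L1 ^ 2) := by linarith
        have h10 : (0:ℝ) ≤ (‖g j‖ / 2 - ε₄) ^ 2 := sq_nonneg _
        have h11 : L1 / 2 * (‖g j‖ ^ 2 / L1 ^ 2) = ‖g j‖ ^ 2 / (2 * L1) := by
          field_simp
        rw [h11] at h9
        have h12 : (1 / L1) * (‖g j‖ ^ 2 - ε₄ * ‖g j‖) - ‖g j‖ ^ 2 / (2 * L1)
            - (‖g j‖ ^ 2 / (4 * L1) - ε₁ ^ 2 / (8 * L1))
            = (1 / L1) * ((‖g j‖ / 2 - ε₄) ^ 2 + (ε₁ ^ 2 / 8 - ε₄ ^ 2)) := by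
          field_simp; ring
        have h13 : (0:ℝ) ≤ (1 / L1) * ((‖g j‖ / 2 - ε₄) ^ 2 + (ε₁ ^ 2 / 8 - ε₄ ^ 2)) := by
          apply mul_nonneg (by positivity)
          linarith [h10, hε₄sq]
        linarith [h12 ▸ h13]
      push_neg at hcond
      rcases not_and_or.mp hT with hC | hG
      · push_neg at hC
        have h7 : -(ε₂ ^ 2 / (2 * L2 ^ 2)) * ⟪(H j) (v j), v j⟫ - 11 * ε₂ ^ 3 / (48 * L2 ^ 2)
            ≥ ε₂ ^ 3 / (48 * L2 ^ 2) := by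
          have hA := mul_le_mul_of_nonneg_left hC
            (by positivity : (0:ℝ) ≤ ε₂ ^ 2 / (2 * L2 ^ 2))
          have hB : (ε₂ ^ 2 / (2 * L2 ^ 2)) * (-ε₂ / 2) = -(ε₂ ^ 3 / (4 * L2 ^ 2)) := by ring
          have hCc : ε₂ ^ 3 / (4 * L2 ^ 2) - 11 * ε₂ ^ 3 / (48 * L2 ^ 2)
              = ε₂ ^ 3 / (48 * L2 ^ 2) := by ring
          linarith [hA, hB ▸ hA]
        linarith [hcond, key]
      · push_neg at hG
        have h7 : ‖g j‖ ^ 2 ≥ ε₁ ^ 2 := pow_le_pow_left₀ hε₁.le hG.le 2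
        have h8 : ‖g j‖ ^ 2 / (4 * L1) - ε₁ ^ 2 / (8 * L1) ≥ ε₁ ^ 2 / (8 * L1) := by
          have e : ε₁ ^ 2 / (4 * L1) = 2 * (ε₁ ^ 2 / (8 * L1)) := by field_simp; ring
          have : ‖g j‖ ^ 2 / (4 * L1) ≥ ε₁ ^ 2 / (4 * L1) :=
            div_le_div_of_nonneg_right h7 (by positivity) |>.trans_eq rfl
          linarith [this, e]
        linarith [key, h8]
  -- chained decrease
  have chain : ∀ n : ℕ,
      (∀ i : ℕ, 1 ≤ i → i ≤ n → ¬(⟪(H i) (v i), v i⟫ > -ε₂ / 2 ∧ ‖g i‖ ≤ ε₁)) →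
      f (x (n + 1)) ≤ f (x 1) - n * δ := by
    intro n
    induction n with
    | zero => intro _; simp
    | succ n ih =>
      intro hall
      have h1 := ih (fun i hi1 hi2 => hall i hi1 (le_trans hi2 (Nat.le_succ n)))
      have h2 := step (n + 1) (by omega) (hall (n + 1) (by omega) (le_refl _))
      push_cast
      push_cast at h1
      linarith
  -- existence of a terminating index
  have hexists : ∃ j : ℕ, 1 ≤ j ∧ (⟪(H j) (v j), v j⟫ > -ε₂ / 2 ∧ ‖g j‖ ≤ ε₁) := by
    by_contra hcon
    have hcon' : ∀ j : ℕ, 1 ≤ j → ¬(⟪(H j) (v j), v j⟫ > -ε₂ / 2 ∧ ‖g j‖ ≤ ε₁) :=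
      fun j hj hT => hcon ⟨j, hj, hT⟩
    obtain ⟨n, hn⟩ := exists_nat_gt (Δ / δ)
    have h1 := chain n (fun i hi1 _ => hcon' i hi1)
    have h2 : f (x 1) - f (x (n + 1)) ≤ Δ := by rw [hx1]; exact hΔ _
    have h3 : (n : ℝ) * δ ≤ Δ := by linarith
    have h4 : Δ < (n : ℝ) * δ := by
      rw [div_lt_iff₀ hδpos] at hn; linarith
    linarith
  refine ⟨Nat.find hexists, (Nat.find_spec hexists).1, (Nat.find_spec hexists).2, ?_, ?_, ?_, ?_⟩
  · intro i hi1 hi2 hT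
    exact Nat.find_min hexists hi2 ⟨hi1, hT⟩
  · -- bound on jstar
    set jstar := Nat.find hexists with hjs
    have hj1 : 1 ≤ jstar := (Nat.find_spec hexists).1
    set m := jstar - 1 with hm
    have hmj : m + 1 = jstar := by omega
    have h1 := chain m (fun i hi1 hi2 => fun hT =>
      Nat.find_min hexists (by omega) ⟨hi1, hT⟩)
    rw [hmj] at h1
    have h2 : f (x 1) - f (x jstar) ≤ Δ := by rw [hx1]; exact hΔ _
    have h3 : (m : ℝ) * δ ≤ Δ := by linarith
    have h4 : (m : ℝ) ≤ Δ / δ := (le_div_iff₀ hδpos).mpr h3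
    have h5 : (jstar : ℝ) = (m : ℝ) + 1 := by
      rw [← hmj]; push_cast; ring
    have h6 : Δ / δ = max (48 * L2 ^ 2 / ε₂ ^ 3) (8 * L1 / ε₁ ^ 2) * Δ := by
      have hinv : δ⁻¹ = max (48 * L2 ^ 2 / ε₂ ^ 3) (8 * L1 / ε₁ ^ 2) := by
        rw [hδ]
        rcases le_total (ε₂ ^ 3 / (48 * L2 ^ 2)) (ε₁ ^ 2 / (8 * L1)) with h | h
        · rw [min_eq_left h, max_eq_left]
          · rw [inv_div]
          · have h2 := inv_anti₀ (by positivity : (0:ℝ) < ε₂ ^ 3 / (48 * L2 ^ 2)) h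
            rw [inv_div, inv_div] at h2
            exact h2
        · rw [min_eq_right h, max_eq_right]
          · rw [inv_div]
          · have h2 := inv_anti₀ (by positivity : (0:ℝ) < ε₁ ^ 2 / (8 * L1)) h
            rw [inv_div, inv_div] at h2
            exact h2
      rw [div_eq_mul_inv, hinv, mul_comm]
    linarith [h6 ▸ h4]
  · -- gradient at termination
    have hT := (Nat.find_spec hexists).2
    have hj1 : 1 ≤ Nat.find hexists := (Nat.find_spec hexists).1
    have hgj := hg _ hj1
    calc ‖gradient f (x (Nat.find hexists))‖
        = ‖g (Nat.find hexists) - (g (Nat.find hexists) - gradient f (x (Nat.find hexists)))‖ := by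
          congr 1; abel
      _ ≤ ‖g (Nat.find hexists)‖ + ‖g (Nat.find hexists) - gradient f (x (Nat.find hexists))‖ :=
          norm_sub_le _ _
      _ ≤ ε₁ + ε₄ := add_le_add hT.2 hgj
      _ ≤ 2 * ε₁ := by linarith [hε₄ε₁]
  · -- Hessian at termination
    intro u hu
    have hT := (Nat.find_spec hexists).2
    have hj1 : 1 ≤ Nat.find hexists := (Nat.find_spec hexists).1
    have hHj := hHapprox _ hj1
    have hgnorm : ‖g (Nat.find hexists)‖ ^ α ≤ ε₂ := by
      exact le_of_le_of_eq (Real.rpow_le_rpow (norm_nonneg _) hT.2 hα.le) hε₂.symm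
    have hmax : max ε₂ (‖g (Nat.find hexists)‖ ^ α) = ε₂ := max_eq_left hgnorm
    have h1 := hmin _ hj1 u hu
    rw [hmax] at h1
    have h2 := qdiff (H (Nat.find hexists)) (fderiv ℝ (gradient f) (x (Nat.find hexists))) u hu
    have h3 := abs_le.mp (le_trans h2 hHj)
    have h4 := hT.1
    -- ⟪B u, u⟫ ≥ ⟪H u, u⟫ - ε₃ ≥ (⟪H v, v⟫ - ε₂/2) - ε₃ ≥ -ε₂/2 - ε₂/2 - ε₂/24 ≥ -2ε₂
    have h5 : ε₃ ≤ ε₂ / 24 := hε₃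
    linarith [h3.1, h1, h4, h5, hε₂pos]
end

section
/- Let f : ℝ^d → ℝ be differentiable, let L1, L2, ε₁, ε₂ > 0, and for x' ∈ ℝ^d define ρ_{x'}(x) = L1·([‖x − x'‖ − ε₂/L2]_+)², where [t]_+ = max(t, 0). Suppose y, x' ∈ ℝ^d satisfy ‖∇f(y)‖ > ε₁ and ‖∇f(y) + ∇ρ_{x'}(y)‖ ≤ ε₁/2. Then ‖y − x'‖ ≥ ε₂/L2 + ε₁/(4·L1). -/
open scoped RealInnerProductSpace

/-- if at `y` the gradient of `f` is large but the gradient of the penalized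
function `f + ρ_{x'}` is small, then `y` is far from `x'`. -/
theorem far_from_center_of_penalty {d : ℕ}
    (f : EuclideanSpace ℝ (Fin d) → ℝ) (L1 L2 ε₁ ε₂ : ℝ)
    (hL1 : 0 < L1) (hL2 : 0 < L2) (hε₁ : 0 < ε₁) (hε₂ : 0 < ε₂)
    (hdiff : Differentiable ℝ f)
    (y x' : EuclideanSpace ℝ (Fin d))
    (hbig : ‖gradient f y‖ > ε₁)
    (hsmall : ‖gradient f y +
      gradient (fun z : EuclideanSpace ℝ (Fin d) =>
        L1 * (max (‖z - x'‖ - ε₂ / L2) 0) ^ 2) y‖ ≤ ε₁ / 2) :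
    ‖y - x'‖ ≥ ε₂ / L2 + ε₁ / (4 * L1) := by
  set c : ℝ := ε₂ / L2 with hc
  set r : ℝ := ‖y - x'‖ with hrdef
  have hc0 : 0 < c := div_pos hε₂ hL2
  set ρ : EuclideanSpace ℝ (Fin d) → ℝ :=
    fun z => L1 * (max (‖z - x'‖ - c) 0) ^ 2 with hρ
  by_cases hcase : r ≤ c
  · -- near case: gradient of ρ is 0, contradiction
    exfalso
    have hgrad : HasGradientAt ρ (0 : EuclideanSpace ℝ (Fin d)) y := by
      rw [hasGradientAt_iff_isLittleO]
      have hy0 : ρ y = 0 := by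
        simp only [hρ]
        rw [max_eq_right (by linarith)]
        ring
      rw [Asymptotics.isLittleO_iff]
      intro ε hε
      have hball : ∀ᶠ z in nhds y, ‖z - y‖ < ε / L1 := by
        have := Metric.ball_mem_nhds y (div_pos hε hL1)
        filter_upwards [this] with z hz
        simpa [dist_eq_norm] using hz
      filter_upwards [hball] with z hz
      have hm : max (‖z - x'‖ - c) 0 ≤ ‖z - y‖ := by
        apply max_le _ (norm_nonneg _)
        have : ‖z - x'‖ ≤ ‖z - y‖ + ‖y - x'‖ := norm_sub_le_norm_sub_add_norm_sub z y x'
        linarith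
      have hm0 : (0:ℝ) ≤ max (‖z - x'‖ - c) 0 := le_max_right _ _
      have hρz : |ρ z| ≤ L1 * ‖z - y‖ ^ 2 := by
        rw [abs_of_nonneg (by positivity)]
        have h2 := sq_le_sq' (by linarith) hm
        simp only [hρ]
        nlinarith
      have : ρ z - ρ y - ⟪(0 : EuclideanSpace ℝ (Fin d)), z - y⟫ = ρ z := by
        rw [hy0, inner_zero_left]; ring
      rw [Real.norm_eq_abs, this]
      calc |ρ z| ≤ L1 * ‖z - y‖ ^ 2 := hρz
        _ ≤ ε * ‖z - y‖ := by
              have h1 : L1 * ‖z - y‖ ≤ ε := by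
                have := (le_div_iff₀ hL1).mp hz.le
                linarith
              nlinarith [mul_le_mul_of_nonneg_right h1 (norm_nonneg (z - y))]
        _ ≤ ε * ‖z - y‖ := le_refl _
    rw [hgrad.gradient, add_zero] at hsmall
    linarith
  · push_neg at hcase
    have hr0 : 0 < r := lt_trans hc0 hcase
    -- derivative of z ↦ ‖z - x'‖ ^ 2
    have hq : HasFDerivAt (fun z : EuclideanSpace ℝ (Fin d) => ‖z - x'‖ ^ 2)
        (2 • (innerSL ℝ (y - x')).comp (ContinuousLinearMap.id ℝ _)) y := by
      simpa using ((hasFDerivAt_id y).sub_const x').norm_sq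
    -- derivative of z ↦ ‖z - x'‖ via sqrt
    have hsq : HasDerivAt Real.sqrt (1 / (2 * Real.sqrt (r ^ 2))) (r ^ 2) :=
      Real.hasDerivAt_sqrt (by positivity)
    have hn' : HasFDerivAt (fun z : EuclideanSpace ℝ (Fin d) => Real.sqrt (‖z - x'‖ ^ 2))
        ((1 / (2 * Real.sqrt (r ^ 2))) • (2 • (innerSL ℝ (y - x')).comp
          (ContinuousLinearMap.id ℝ _))) y := hsq.comp_hasFDerivAt y hq
    have hfun : (fun z : EuclideanSpace ℝ (Fin d) => Real.sqrt (‖z - x'‖ ^ 2))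
        = fun z => ‖z - x'‖ := funext fun z => Real.sqrt_sq (norm_nonneg _)
    rw [hfun, Real.sqrt_sq hr0.le] at hn'
    -- outer function t ↦ L1 * (t - c)^2
    have hφ : HasDerivAt (fun t : ℝ => L1 * (t - c) ^ 2)
        (L1 * (2 * (r - c) ^ 1 * 1)) r := (((hasDerivAt_id r).sub_const c).pow 2).const_mul L1
    have hcomp : HasFDerivAt (fun z : EuclideanSpace ℝ (Fin d) => L1 * (‖z - x'‖ - c) ^ 2)
        ((L1 * (2 * (r - c) ^ 1 * 1)) • ((1 / (2 * r)) • (2 • (innerSL ℝ (y - x')).comp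
          (ContinuousLinearMap.id ℝ _)))) y :=
          hφ.comp_hasFDerivAt (f := fun z : EuclideanSpace ℝ (Fin d) => ‖z - x'‖) y hn'
    -- eventually ρ agrees with this
    have hev : ∀ᶠ z in nhds y, c < ‖z - x'‖ := by
      have hcont : ContinuousAt (fun z : EuclideanSpace ℝ (Fin d) => ‖z - x'‖) y :=
        (continuous_norm.comp (continuous_id.sub continuous_const)).continuousAt
      exact hcont (Ioi_mem_nhds hcase)
    have hρd : HasFDerivAt ρ
        ((L1 * (2 * (r - c) ^ 1 * 1)) • ((1 / (2 * r)) • (2 • (innerSL ℝ (y - x')).comp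
          (ContinuousLinearMap.id ℝ _)))) y := by
      apply hcomp.congr_of_eventuallyEq
      filter_upwards [hev] with z hz
      simp only [hρ, max_eq_left (by linarith : (0:ℝ) ≤ ‖z - x'‖ - c)]
    -- translate to gradient
    set G : EuclideanSpace ℝ (Fin d) := (2 * L1 * (r - c) / r) • (y - x') with hG
    have hgrad : HasGradientAt ρ G y := by
      rw [hasGradientAt_iff_hasFDerivAt]
      refine hρd.congr_fderiv ?_
      ext z
      simp only [InnerProductSpace.toDual_apply_apply, hG, inner_smul_left,
        ContinuousLinearMap.smul_apply, ContinuousLinearMap.coe_smul',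
        Pi.smul_apply, ContinuousLinearMap.comp_apply, ContinuousLinearMap.id_apply,
        innerSL_apply_apply, smul_eq_mul, map_mul, RCLike.star_def, conj_trivial]
      field_simp
      ring
    have hnormG : ‖G‖ = 2 * L1 * (r - c) := by
      rw [hG, norm_smul, Real.norm_eq_abs, ← hrdef,
        abs_of_nonneg (div_nonneg (by nlinarith) hr0.le)]
      field_simp
    rw [hgrad.gradient] at hsmall
    have htri : ‖gradient f y‖ ≤ ‖gradient f y + G‖ + ‖G‖ := by
      have := norm_sub_le (gradient f y + G) G
      simpa using this
    have : ε₁ / 2 ≤ ‖G‖ := by linarith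
    rw [hnormG] at this
    have : ε₁ / (4 * L1) ≤ r - c := by
      rw [div_le_iff₀ (by positivity)]
      nlinarith
    linarith
end

section
/- Let f : ℝ^d → ℝ be twice continuously differentiable with L1-Lipschitz gradient and L2-Lipschitz Hessian, let α ≥ 0, and let x₀ ∈ ℝ^d satisfy λ_min(∇²f(x₀)) ≥ −α. Define g(x) = f(x) + L1·([‖x − x₀‖ − α/L2]_+)². Then g is 3α-almost convex, i.e. g(y) ≥ g(x) + ⟨∇g(x), y − x⟩ − (3α/2)·‖y − x‖² for all x, y, and g is 5·L1-smooth, i.e. ‖∇g(x) − ∇g(y)‖ ≤ 5·L1·‖x − y‖ for all x, y. -/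
open scoped RealInnerProductSpace

/-- min is 1-Lipschitz type core inequality packaged for our use -/
lemma penAux_E1 (L1 m α c x y mx my : ℝ) (hL1 : 0 < L1) (hα : 0 ≤ α) (hc : 0 ≤ c)
    (hxy : x ≤ y) (hx : 0 ≤ x)
    (hmx : mx = min x c) (hmy : my = min y c)
    (hm1 : m ≤ L1) (hm3 : x + y ≤ 4*c → m ≤ 3*α) :
    2*L1*((y-x)*(my-mx)) ≤ (2*L1 - m + 3*α)*(y-x)^2 := by
  have hD0 : 0 ≤ my - mx := by
    rw [hmx, hmy]; have := min_le_min hxy (le_refl c); linarith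
  have hD1 : my - mx ≤ y - x := by
    rw [hmx, hmy]
    rcases le_total x c with h1 | h1 <;> rcases le_total y c with h2 | h2 <;>
      simp [min_eq_left, min_eq_right, h1, h2] <;> linarith
  rcases le_or_gt (x + y) (4*c) with hS | hS
  · have h3 := hm3 hS
    nlinarith [mul_nonneg (sub_nonneg.2 hxy) hD0, sq_nonneg (y-x),
      mul_le_mul_of_nonneg_left hD1 (le_of_lt (by linarith : (0:ℝ) < 2*L1))]
  · have h2D : 2*(my - mx) ≤ y - x := by
      rcases le_total c x with h1 | h1
      · have : mx = c := by rw [hmx, min_eq_right h1]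
        have : my = c := by rw [hmy, min_eq_right (by linarith)]
        linarith [hD0, hxy, ‹mx = c›]
      · have hmx' : mx = x := by rw [hmx, min_eq_left h1]
        have hmy' : my ≤ c := by rw [hmy]; exact min_le_right _ _
        linarith
    nlinarith [mul_nonneg (sub_nonneg.2 hxy) hD0, sq_nonneg (y-x),
      mul_le_mul_of_nonneg_left h2D (le_of_lt hL1)]

lemma penAux_E2 (L1 m α c x y mx my : ℝ) (hL1 : 0 < L1) (hα : 0 ≤ α) (hc : 0 ≤ c)
    (hx : 0 ≤ x) (hy : 0 ≤ y)
    (hmx : mx = min x c) (hmy : my = min y c)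
    (hm1 : m ≤ L1) (hm3 : x + y ≤ 4*c → m ≤ 3*α) :
    2*L1*((x+y)*(mx+my)) ≤ (2*L1 - m + 3*α)*(x+y)^2 := by
  have hmx0 : 0 ≤ mx := by rw [hmx]; exact le_min hx hc
  have hmy0 : 0 ≤ my := by rw [hmy]; exact le_min hy hc
  have hmxx : mx ≤ x := by rw [hmx]; exact min_le_left _ _
  have hmyy : my ≤ y := by rw [hmy]; exact min_le_left _ _
  have hmxc : mx ≤ c := by rw [hmx]; exact min_le_right _ _
  have hmyc : my ≤ c := by rw [hmy]; exact min_le_right _ _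
  rcases le_or_gt (x + y) (4*c) with hS | hS
  · have h3 := hm3 hS
    nlinarith [mul_nonneg (by linarith : (0:ℝ) ≤ x + y) (by linarith : (0:ℝ) ≤ (x+y) - (mx+my))]
  · have h2M : 2*(mx + my) ≤ x + y := by linarith
    nlinarith [mul_nonneg (by linarith : (0:ℝ) ≤ x + y)
      (by linarith : (0:ℝ) ≤ (x+y) - 2*(mx+my))]

/-- The master scalar inequality. -/
lemma penAux_master (L1 m α c ra rb t sA sB : ℝ) (hL1 : 0 < L1) (hα : 0 ≤ α) (hc : 0 ≤ c)
    (hra : 0 ≤ ra) (hrb : 0 ≤ rb) (htl : -(ra*rb) ≤ t) (htu : t ≤ ra*rb)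
    (hsA : sA * ra = min ra c) (hsB : sB * rb = min rb c)
    (hm1 : m ≤ L1) (hm3 : ra + rb ≤ 4*c → m ≤ 3*α) :
    2*L1*(sB*rb^2 + sA*ra^2 - (sA+sB)*t) ≤ (2*L1 - m + 3*α)*(ra^2+rb^2-2*t) := by
  have Eplus : 2*L1*((rb-ra)*(sB*rb - sA*ra)) ≤ (2*L1 - m + 3*α)*(rb-ra)^2 := by
    rcases le_total ra rb with h | h
    · have := penAux_E1 L1 m α c ra rb (sA*ra) (sB*rb) hL1 hα hc h hra hsA hsB hm1 hm3
      linarith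
    · have := penAux_E1 L1 m α c rb ra (sB*rb) (sA*ra) hL1 hα hc h hrb hsB hsA hm1
        (fun hh => hm3 (by linarith))
      nlinarith [this]
  have Eminus : 2*L1*((ra+rb)*(sA*ra + sB*rb)) ≤ (2*L1 - m + 3*α)*(ra+rb)^2 := by
    have := penAux_E2 L1 m α c ra rb (sA*ra) (sB*rb) hL1 hα hc hra hrb hsA hsB hm1 hm3
    linarith
  rcases le_or_gt 0 (2*(2*L1 - m + 3*α) - 2*L1*(sA+sB)) with hK | hK
  · have hP : 0 ≤ ra*rb - t := by linarith
    nlinarith [Eplus, mul_nonneg hP hK]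
  · have hQ : 0 ≤ t + ra*rb := by linarith
    nlinarith [Eminus, mul_nonneg hQ (by linarith : (0:ℝ) ≤ -(2*(2*L1 - m + 3*α) - 2*L1*(sA+sB)))]

variable {E : Type*} [NormedAddCommGroup E] [InnerProductSpace ℝ E]

lemma penAux_smin_mul (c : ℝ) (hc : 0 ≤ c) (A : E) :
    min 1 (c/‖A‖) * ‖A‖ = min ‖A‖ c := by
  rcases eq_or_ne ‖A‖ 0 with h | h
  · simp [h, min_eq_left hc]
  · have h0 : 0 < ‖A‖ := lt_of_le_of_ne (norm_nonneg A) (Ne.symm h)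
    rw [min_mul_of_nonneg _ _ (norm_nonneg A), one_mul, div_mul_cancel₀ _ h]

lemma penAux_smin_nonneg (c : ℝ) (hc : 0 ≤ c) (A : E) : 0 ≤ min 1 (c/‖A‖) :=
  le_min zero_le_one (div_nonneg hc (norm_nonneg A))

lemma penAux_smin_le_one (c : ℝ) (A : E) : min 1 (c/‖A‖) ≤ 1 := min_le_left _ _

/-- nonexpansiveness of projection to the ball of radius c -/
lemma penAux_tau_lip (c : ℝ) (hc : 0 ≤ c) (A B : E) :
    ‖min 1 (c/‖A‖) • A - min 1 (c/‖B‖) • B‖ ≤ ‖A - B‖ := by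
  set sA := min 1 (c/‖A‖) with hsA
  set sB := min 1 (c/‖B‖) with hsB
  have hsA0 := penAux_smin_nonneg c hc A
  have hsB0 := penAux_smin_nonneg c hc B
  have hsA1 := penAux_smin_le_one c A
  have hsB1 := penAux_smin_le_one c B
  have hAm := penAux_smin_mul c hc A
  have hBm := penAux_smin_mul c hc B
  apply le_of_pow_le_pow_left₀ (n := 2) (by norm_num) (norm_nonneg _)
  rw [norm_sub_sq_real, norm_sub_sq_real, real_inner_smul_left, real_inner_smul_right,
    norm_smul, norm_smul, Real.norm_eq_abs, Real.norm_eq_abs, abs_of_nonneg hsA0,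
    abs_of_nonneg hsB0, mul_pow, mul_pow]
  have ht := real_inner_le_norm A B
  have hmin : (min ‖A‖ c - min ‖B‖ c)^2 ≤ (‖A‖ - ‖B‖)^2 := by
    rcases le_total ‖A‖ c with h1 | h1 <;> rcases le_total ‖B‖ c with h2 | h2 <;>
      simp [min_eq_left, min_eq_right, h1, h2] <;> nlinarith
  have e1 : sA^2 * ‖A‖^2 = (min ‖A‖ c)^2 := by rw [← hAm]; ring
  have e2 : sB^2 * ‖B‖^2 = (min ‖B‖ c)^2 := by rw [← hBm]; ring
  have e3 : (sA*sB) * (‖A‖*‖B‖) = min ‖A‖ c * min ‖B‖ c := by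
    rw [← hAm, ← hBm]; ring
  nlinarith [mul_nonneg (by nlinarith : (0:ℝ) ≤ 1 - sA*sB)
    (by nlinarith [real_inner_le_norm A B] : (0:ℝ) ≤ ‖A‖*‖B‖ - ⟪A,B⟫)]

variable {E : Type*} [NormedAddCommGroup E] [InnerProductSpace ℝ E] [CompleteSpace E]

lemma penAux_hasGradient (L1 c : ℝ) (hL1 : 0 < L1) (hc : 0 ≤ c) (x₀ z : E) :
    HasGradientAt (fun w => L1 * (max (‖w - x₀‖ - c) 0)^2)
      ((2*L1*(1 - min 1 (c/‖z-x₀‖))) • (z - x₀)) z := by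
  rcases le_or_gt ‖z - x₀‖ c with hr | hr
  · -- inside or on the boundary: gradient is zero
    have hzero : (2*L1*(1 - min 1 (c/‖z-x₀‖))) • (z - x₀) = 0 := by
      rcases eq_or_ne ‖z - x₀‖ 0 with h0 | h0
      · rw [norm_eq_zero] at h0; rw [h0, smul_zero]
      · have hpos : 0 < ‖z - x₀‖ := lt_of_le_of_ne (norm_nonneg _) (Ne.symm h0)
        have : min 1 (c/‖z-x₀‖) = 1 := min_eq_left ((one_le_div hpos).2 hr)
        rw [this]; norm_num
    rw [hzero]
    rw [hasGradientAt_iff_isLittleO]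
    have hpz : L1 * (max (‖z - x₀‖ - c) 0)^2 = 0 := by
      rw [max_eq_right (by linarith)]; ring
    rw [Asymptotics.isLittleO_iff]
    intro ε hε
    rw [Metric.eventually_nhds_iff]
    refine ⟨ε / L1, div_pos hε hL1, fun w hw => ?_⟩
    rw [dist_eq_norm] at hw
    have hM : max (‖w - x₀‖ - c) 0 ≤ ‖w - z‖ := by
      apply max_le _ (norm_nonneg _)
      have : ‖w - x₀‖ ≤ ‖w - z‖ + ‖z - x₀‖ := by
        calc ‖w - x₀‖ = ‖(w - z) + (z - x₀)‖ := by abel_nf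
        _ ≤ ‖w - z‖ + ‖z - x₀‖ := norm_add_le _ _
      linarith
    have hM0 : 0 ≤ max (‖w - x₀‖ - c) 0 := le_max_right _ _
    rw [hpz, inner_zero_left]
    simp only [sub_zero]
    rw [Real.norm_eq_abs, abs_of_nonneg (by positivity)]
    calc L1 * (max (‖w - x₀‖ - c) 0)^2 ≤ L1 * (‖w - z‖ * ‖w - z‖) := by
          rw [sq]; exact mul_le_mul_of_nonneg_left (mul_le_mul hM hM hM0 (norm_nonneg _)) hL1.le
      _ ≤ ε * ‖w - z‖ := by
          rcases eq_or_ne ‖w - z‖ 0 with h | h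
          · rw [h]; ring_nf; exact le_refl _
          · have hwz : 0 < ‖w - z‖ := lt_of_le_of_ne (norm_nonneg _) (Ne.symm h)
            have h7 : ‖w - z‖ * L1 ≤ ε := (le_div_iff₀ hL1).1 hw.le
            nlinarith
  · -- outside: chain rule
    have hrpos : 0 < ‖z - x₀‖ := lt_of_le_of_lt hc hr
    set r := ‖z - x₀‖ with hrdef
    -- derivative of the norm
    have h1 : HasFDerivAt (fun w : E => w - x₀) (ContinuousLinearMap.id ℝ E) z :=
      (hasFDerivAt_id z).sub_const x₀
    have h2 : HasFDerivAt (fun w : E => ‖w - x₀‖^2)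
        (2 • (innerSL ℝ (z - x₀)).comp (ContinuousLinearMap.id ℝ E)) z := h1.norm_sq
    have h3 : HasDerivAt Real.sqrt (1/(2*Real.sqrt (r^2))) (r^2) :=
      Real.hasDerivAt_sqrt (by positivity)
    have h4 : HasFDerivAt (fun w : E => Real.sqrt (‖w - x₀‖^2))
        ((1/(2*Real.sqrt (r^2))) • (2 • (innerSL ℝ (z - x₀)).comp (ContinuousLinearMap.id ℝ E)))
        z := h3.comp_hasFDerivAt z h2
    have hfun : (fun w : E => Real.sqrt (‖w - x₀‖^2)) = fun w : E => ‖w - x₀‖ := by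
      funext w; exact Real.sqrt_sq (norm_nonneg _)
    rw [hfun] at h4
    have hsq : Real.sqrt (r^2) = r := Real.sqrt_sq hrpos.le
    -- chain with the 1d function
    have hq : HasDerivAt (fun u : ℝ => L1 * (u - c)^2) (L1 * (2*(r - c))) r := by
      have := (((hasDerivAt_id r).sub_const c).pow 2).const_mul L1
      simpa using this
    have h5 := hq.comp_hasFDerivAt z h4
    -- identify the function on a neighborhood
    have hev : (fun w : E => L1 * (max (‖w - x₀‖ - c) 0)^2)
        =ᶠ[nhds z] ((fun u : ℝ => L1 * (u - c)^2) ∘ (fun w : E => ‖w - x₀‖)) := by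
      have hcont : ContinuousAt (fun w : E => ‖w - x₀‖) z :=
        ((continuous_id.sub continuous_const).norm).continuousAt
      filter_upwards [hcont.eventually (eventually_gt_nhds hr)] with w hw
      simp only [Function.comp]
      rw [max_eq_left (by linarith)]
    have h6 := h5.congr_of_eventuallyEq hev
    -- convert to gradient
    rw [hasFDerivAt_iff_hasGradientAt] at h6
    convert h6 using 1
    have hkey : (InnerProductSpace.toDual ℝ E) ((2*L1*(1 - min 1 (c/r))) • (z - x₀)) =
        ((L1 * (2*(r - c))) • (1/(2*Real.sqrt (r^2))) •
          2 • (innerSL ℝ (z - x₀)).comp (ContinuousLinearMap.id ℝ E)) := by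
      apply ContinuousLinearMap.ext
      intro y
      rw [InnerProductSpace.toDual_apply_apply]
      simp only [ContinuousLinearMap.smul_apply, ContinuousLinearMap.coe_comp',
        Function.comp_apply, ContinuousLinearMap.coe_id', id_eq, ContinuousLinearMap.smul_apply,
        innerSL_apply_apply, hsq]
      rw [real_inner_smul_left]
      have hmin : min 1 (c/r) = c/r := min_eq_right ((div_le_one hrpos).2 hr.le)
      rw [hmin]
      rw [smul_eq_mul]
      have hr0 : r ≠ 0 := hrpos.ne'
      field_simp
      ring_nf
      rw [mul_comm r, mul_assoc, mul_inv_cancel₀ hr0, mul_one]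
    rw [← hkey, LinearIsometryEquiv.symm_apply_apply]

section MainAux
variable {E : Type*} [NormedAddCommGroup E] [InnerProductSpace ℝ E] [CompleteSpace E]

/-- two-point lower bound on the gradient increment of an `L2`-Hessian-Lipschitz function. -/
lemma penAux_fB {f : E → ℝ} (L2 α : ℝ) (hL2 : 0 < L2) (x₀ : E)
    (hfd : Differentiable ℝ (gradient f))
    (hHlip : ∀ a b : E, ‖fderiv ℝ (gradient f) a - fderiv ℝ (gradient f) b‖ ≤ L2 * ‖a - b‖)
    (hquad0 : ∀ u : E, -α * ‖u‖^2 ≤ ⟪(fderiv ℝ (gradient f) x₀) u, u⟫)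
    (a b : E) :
    -(α + L2*(‖a - x₀‖ + ‖b - x₀‖)/2) * ‖b - a‖^2
      ≤ ⟪gradient f b - gradient f a, b - a⟫ := by
  have hquad : ∀ x v : E, -(α + L2*‖x - x₀‖) * ‖v‖^2 ≤ ⟪(fderiv ℝ (gradient f) x) v, v⟫ := by
    intro x v
    have h1 := hquad0 v
    have h2 : ‖(fderiv ℝ (gradient f) x - fderiv ℝ (gradient f) x₀) v‖ ≤ L2*‖x-x₀‖*‖v‖ :=
      le_trans (ContinuousLinearMap.le_opNorm _ v)
        (mul_le_mul_of_nonneg_right (hHlip x x₀) (norm_nonneg v))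
    have h3 : |⟪(fderiv ℝ (gradient f) x - fderiv ℝ (gradient f) x₀) v, v⟫| ≤ L2*‖x-x₀‖*‖v‖*‖v‖ :=
      le_trans (abs_real_inner_le_norm _ _) (mul_le_mul_of_nonneg_right h2 (norm_nonneg v))
    rw [ContinuousLinearMap.sub_apply, inner_sub_left] at h3
    have h4 := (abs_le.1 h3).1
    have hv2 : ‖v‖*‖v‖ = ‖v‖^2 := (sq ‖v‖).symm
    nlinarith
  set v := b - a with hvdef
  set ra := ‖a - x₀‖ with hradef
  set rb := ‖b - x₀‖ with hrbdef
  set γ : ℝ → E := fun t => a + t • v with hγdef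
  have hγd : ∀ t : ℝ, HasDerivAt γ v t := by
    intro t
    have h : HasDerivAt (fun t : ℝ => t • v) ((1:ℝ) • v) t := (hasDerivAt_id t).smul_const v
    have h' := h.const_add a; rw [one_smul] at h'; exact h'
  have hw : ∀ t : ℝ, HasDerivAt (fun t => ⟪gradient f (γ t), v⟫)
      ⟪(fderiv ℝ (gradient f) (γ t)) v, v⟫ t := by
    intro t
    have h1 : HasDerivAt (fun t => gradient f (γ t)) ((fderiv ℝ (gradient f) (γ t)) v) t :=
      ((hfd (γ t)).hasFDerivAt).comp_hasDerivAt t (hγd t)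
    have h2 := h1.inner ℝ (hasDerivAt_const t v)
    simpa using h2
  set C1 := α*‖v‖^2 + L2*‖v‖^2*ra with hC1
  set C2 := L2*‖v‖^2*(rb-ra)/2 with hC2
  set F : ℝ → ℝ := fun t => ⟪gradient f (γ t), v⟫ + C1*t + C2*t^2 with hFdef
  have hFd : ∀ t, HasDerivAt F (⟪(fderiv ℝ (gradient f) (γ t)) v, v⟫ + C1 + C2*(2*t)) t := by
    intro t
    have h2 : HasDerivAt (fun t : ℝ => C1*t) C1 t := by simpa using (hasDerivAt_id t).const_mul C1
    have h3 : HasDerivAt (fun t : ℝ => C2*t^2) (C2*(2*t)) t := by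
      have h := (hasDerivAt_pow 2 t).const_mul C2
      norm_num at h
      convert h using 1 <;> ring
    exact ((hw t).add h2).add h3
  have hseg : ∀ t ∈ Set.Icc (0:ℝ) 1, ‖γ t - x₀‖ ≤ (1-t)*ra + t*rb := by
    intro t ht
    have hx : γ t - x₀ = (1-t) • (a - x₀) + t • (b - x₀) := by
      simp only [hγdef, hvdef]; module
    rw [hx]
    calc ‖(1-t) • (a - x₀) + t • (b - x₀)‖ ≤ ‖(1-t) • (a - x₀)‖ + ‖t • (b - x₀)‖ :=
          norm_add_le _ _
    _ = (1-t)*ra + t*rb := by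
        rw [norm_smul, norm_smul, Real.norm_eq_abs, Real.norm_eq_abs,
          abs_of_nonneg (by linarith [ht.2] : (0:ℝ) ≤ 1 - t), abs_of_nonneg ht.1]
  have hmono : MonotoneOn F (Set.Icc 0 1) := by
    apply monotoneOn_of_deriv_nonneg (convex_Icc 0 1)
    · exact fun t _ => ((hFd t).continuousAt).continuousWithinAt
    · exact fun t _ => ((hFd t).differentiableAt).differentiableWithinAt
    · intro t ht
      rw [interior_Icc] at ht
      rw [(hFd t).deriv]
      have hb := hquad (γ t) v
      have hsegt := hseg t ⟨ht.1.le, ht.2.le⟩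
      have h5 : L2*‖γ t - x₀‖ ≤ L2*((1-t)*ra + t*rb) := mul_le_mul_of_nonneg_left hsegt hL2.le
      have h6 : -(α + L2*((1-t)*ra + t*rb)) * ‖v‖^2 ≤ ⟪(fderiv ℝ (gradient f) (γ t)) v, v⟫ := by
        refine le_trans ?_ hb
        nlinarith [sq_nonneg ‖v‖]
      rw [hC1, hC2]
      nlinarith [h6]
  have h01 := hmono (Set.left_mem_Icc.2 zero_le_one) (Set.right_mem_Icc.2 zero_le_one) zero_le_one
  have hγ0 : γ 0 = a := by simp [hγdef]
  have hγ1 : γ 1 = b := by simp [hγdef, hvdef]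
  rw [hFdef] at h01
  simp only [hγ0, hγ1] at h01
  norm_num at h01
  rw [inner_sub_left]
  rw [hC1, hC2] at h01
  rw [inner_gradient_left, inner_gradient_left]
  linarith
end MainAux

section MainAux2
variable {E : Type*} [NormedAddCommGroup E] [InnerProductSpace ℝ E] [CompleteSpace E]

/-- gradient of the penalized function -/
lemma penAux_gradsum (f : E → ℝ) (hfd : Differentiable ℝ f) (L1 c : ℝ)
    (hL1 : 0 < L1) (hc0 : 0 ≤ c) (x₀ : E) (g : E → ℝ)
    (hg : g = fun z : E => f z + L1 * (max (‖z - x₀‖ - c) 0) ^ 2) :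
    ∀ z : E, HasGradientAt g
      (gradient f z + (2*L1*(1 - min 1 (c/‖z-x₀‖))) • (z - x₀)) z := by
  intro z
  have h1 := (hfd z).hasGradientAt
  have h3 := h1.hasFDerivAt.add (penAux_hasGradient L1 c hL1 hc0 x₀ z).hasFDerivAt
  have h4 : HasGradientAt (fun z : E => f z + L1 * (max (‖z - x₀‖ - c) 0)^2)
      ((InnerProductSpace.toDual ℝ E).symm
        ((InnerProductSpace.toDual ℝ E) (gradient f z) +
         (InnerProductSpace.toDual ℝ E) ((2*L1*(1 - min 1 (c/‖z-x₀‖))) • (z - x₀)))) z :=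
    hasFDerivAt_iff_hasGradientAt.1 h3
  rw [← map_add, LinearIsometryEquiv.symm_apply_apply] at h4
  rw [hg]
  exact h4

/-- Lipschitz bound for the penalty gradient -/
lemma penAux_pG_lip (L1 c : ℝ) (hL1 : 0 < L1) (hc0 : 0 ≤ c) (x₀ a b : E) :
    ‖(2*L1*(1 - min 1 (c/‖a-x₀‖))) • (a-x₀) - (2*L1*(1 - min 1 (c/‖b-x₀‖))) • (b-x₀)‖
      ≤ 4*L1*‖a-b‖ := by
  have h2 : (2*L1*(1 - min 1 (c/‖a-x₀‖))) • (a-x₀) - (2*L1*(1 - min 1 (c/‖b-x₀‖))) • (b-x₀)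
      = (2*L1) • ((a - b) - (min 1 (c/‖a-x₀‖) • (a-x₀) - min 1 (c/‖b-x₀‖) • (b-x₀))) := by
    module
  have hTau := penAux_tau_lip c hc0 (a - x₀) (b - x₀)
  have hab : (a - x₀) - (b - x₀) = a - b := by abel
  rw [hab] at hTau
  rw [h2, norm_smul, Real.norm_eq_abs, abs_of_nonneg (by positivity : (0:ℝ) ≤ 2*L1)]
  have h4 := norm_sub_le (a - b) (min 1 (c/‖a-x₀‖) • (a-x₀) - min 1 (c/‖b-x₀‖) • (b-x₀))
  nlinarith [norm_nonneg (a-b)]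

/-- from a one-sided gradient monotonicity bound to almost convexity -/
lemma penAux_conv_from_mono (g : E → ℝ) (hdg : ∀ z : E, DifferentiableAt ℝ g z) (K : ℝ)
    (hmono : ∀ a b : E, -K*‖b-a‖^2 ≤ ⟪gradient g b - gradient g a, b - a⟫) :
    ∀ a b : E, g b ≥ g a + ⟪gradient g a, b - a⟫ - (K/2) * ‖b - a‖ ^ 2 := by
  intro a b
  set v := b - a with hvdef
  set γ : ℝ → E := fun t => a + t • v with hγdef
  have hγd : ∀ t : ℝ, HasDerivAt γ v t := by
    intro t
    have h : HasDerivAt (fun t : ℝ => t • v) ((1:ℝ) • v) t := (hasDerivAt_id t).smul_const v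
    have h' := h.const_add a; rw [one_smul] at h'; exact h'
  have hφ : ∀ t : ℝ, HasDerivAt (fun t => g (γ t)) ⟪gradient g (γ t), v⟫ t := by
    intro t
    have h1 := (hdg (γ t)).hasGradientAt.hasFDerivAt
    have h2 := h1.comp_hasDerivAt t (hγd t)
    have h3 : (InnerProductSpace.toDual ℝ E) (gradient g (γ t)) v
        = ⟪gradient g (γ t), v⟫ := InnerProductSpace.toDual_apply_apply
    rw [h3] at h2
    exact h2
  set F : ℝ → ℝ := fun t => g (γ t) - ⟪gradient g a, v⟫*t + (K/2)*‖v‖^2*t^2 with hFdef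
  have hFd : ∀ t : ℝ, HasDerivAt F
      (⟪gradient g (γ t), v⟫ - ⟪gradient g a, v⟫ + (K/2)*‖v‖^2*(2*t)) t := by
    intro t
    have h2 : HasDerivAt (fun t : ℝ => (⟪gradient g a, v⟫ : ℝ)*t) ⟪gradient g a, v⟫ t := by
      simpa using (hasDerivAt_id t).const_mul (⟪gradient g a, v⟫ : ℝ)
    have h3 : HasDerivAt (fun t : ℝ => (K/2)*‖v‖^2*t^2) ((K/2)*‖v‖^2*(2*t)) t := by
      have h := (hasDerivAt_pow 2 t).const_mul ((K/2)*‖v‖^2)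
      norm_num at h
      convert h using 1 <;> ring
    exact ((hφ t).sub h2).add h3
  have hmonoF : MonotoneOn F (Set.Icc 0 1) := by
    apply monotoneOn_of_deriv_nonneg (convex_Icc 0 1)
    · exact fun t _ => ((hFd t).continuousAt).continuousWithinAt
    · exact fun t _ => ((hFd t).differentiableAt).differentiableWithinAt
    · intro t ht
      rw [interior_Icc] at ht
      rw [(hFd t).deriv]
      have hm := hmono a (γ t)
      have hta : γ t - a = t • v := by rw [hγdef]; simp
      rw [hta] at hm
      rw [inner_sub_left, real_inner_smul_right, real_inner_smul_right, norm_smul,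
        Real.norm_eq_abs, mul_pow, sq_abs] at hm
      nlinarith [hm, ht.1, sq_nonneg ‖v‖]
  have h01 := hmonoF (Set.left_mem_Icc.2 zero_le_one) (Set.right_mem_Icc.2 zero_le_one)
    zero_le_one
  have hγ0 : γ 0 = a := by simp [hγdef]
  have hγ1 : γ 1 = b := by simp [hγdef, hvdef]
  rw [hFdef] at h01
  simp only [hγ0, hγ1] at h01
  norm_num at h01
  rw [inner_gradient_left]
  linarith

end MainAux2

section MainAux3
variable {E : Type*} [NormedAddCommGroup E] [InnerProductSpace ℝ E] [CompleteSpace E]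

lemma penAux_inner_expand (L1 sa sb : ℝ) (A B : E) :
    (⟪(2*L1*(1-sb)) • B - (2*L1*(1-sa)) • A, B - A⟫ : ℝ) =
    2*L1*((‖A‖^2 + ‖B‖^2 - 2*⟪A,B⟫) - (sb*‖B‖^2 + sa*‖A‖^2 - (sa+sb)*⟪A,B⟫)) := by
  simp only [inner_sub_left, inner_sub_right, real_inner_smul_left, real_inner_self_eq_norm_sq]
  rw [real_inner_comm B A]
  ring

/-- gradient monotonicity lower bound for the penalized function -/
lemma penAux_mono_g (f : E → ℝ) (L1 L2 α c : ℝ)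
    (hL1 : 0 < L1) (hL2 : 0 < L2) (hα : 0 ≤ α) (hc0 : 0 ≤ c) (hcα : L2 * c = α)
    (x₀ : E) (g : E → ℝ)
    (hglip : ∀ a b : E, ‖gradient f a - gradient f b‖ ≤ L1 * ‖a - b‖)
    (hfB : ∀ a b : E, -(α + L2*(‖a - x₀‖ + ‖b - x₀‖)/2) * ‖b - a‖^2
      ≤ ⟪gradient f b - gradient f a, b - a⟫)
    (hgrad_g : ∀ z : E, gradient g z
      = gradient f z + (2*L1*(1 - min 1 (c/‖z-x₀‖))) • (z - x₀)) :
    ∀ a b : E, -(3*α) * ‖b-a‖^2 ≤ ⟪gradient g b - gradient g a, b - a⟫ := by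
  intro a b
  have hv : b - a = (b - x₀) - (a - x₀) := by abel
  have hnorm : ‖b-a‖^2 = ‖a-x₀‖^2 + ‖b-x₀‖^2 - 2*⟪a-x₀, b-x₀⟫ := by
    rw [hv, norm_sub_sq_real, real_inner_comm (b - x₀) (a - x₀)]
    ring
  -- the f part
  have hfA : -L1*‖b-a‖^2 ≤ ⟪gradient f b - gradient f a, b-a⟫ := by
    have h1 := hglip b a
    have h2 := (abs_le.1 (abs_real_inner_le_norm (gradient f b - gradient f a) (b-a))).1
    have h3 : ‖b - a‖ = ‖a - b‖ := norm_sub_rev _ _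
    nlinarith [norm_nonneg (b-a), sq_nonneg ‖b-a‖]
  have hfm : -(min L1 (α + L2*(‖a-x₀‖+‖b-x₀‖)/2))*‖b-a‖^2
      ≤ ⟪gradient f b - gradient f a, b-a⟫ := by
    rcases le_total L1 (α + L2*(‖a-x₀‖+‖b-x₀‖)/2) with h | h
    · rw [min_eq_left h]; exact hfA
    · rw [min_eq_right h]; exact hfB a b
  -- the penalty part
  have hppart := penAux_inner_expand L1 (min 1 (c/‖a-x₀‖)) (min 1 (c/‖b-x₀‖)) (a-x₀) (b-x₀)
  -- master inequality
  have htl : -(‖a-x₀‖*‖b-x₀‖) ≤ (⟪a-x₀, b-x₀⟫ : ℝ) :=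
    (abs_le.1 (abs_real_inner_le_norm (a-x₀) (b-x₀))).1
  have htu : (⟪a-x₀, b-x₀⟫ : ℝ) ≤ ‖a-x₀‖*‖b-x₀‖ :=
    (abs_le.1 (abs_real_inner_le_norm (a-x₀) (b-x₀))).2
  have hsa' : (min 1 (c/‖a-x₀‖)) * ‖a-x₀‖ = min ‖a-x₀‖ c := penAux_smin_mul c hc0 (a - x₀)
  have hsb' : (min 1 (c/‖b-x₀‖)) * ‖b-x₀‖ = min ‖b-x₀‖ c := penAux_smin_mul c hc0 (b - x₀)
  have hm1 : min L1 (α + L2*(‖a-x₀‖+‖b-x₀‖)/2) ≤ L1 := min_le_left _ _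
  have hm3 : ‖a-x₀‖ + ‖b-x₀‖ ≤ 4*c → min L1 (α + L2*(‖a-x₀‖+‖b-x₀‖)/2) ≤ 3*α := by
    intro h
    refine le_trans (min_le_right _ _) ?_
    have h5 : L2*(‖a-x₀‖+‖b-x₀‖) ≤ L2*(4*c) := mul_le_mul_of_nonneg_left h hL2.le
    nlinarith [hcα]
  have hmaster := penAux_master L1 (min L1 (α + L2*(‖a-x₀‖+‖b-x₀‖)/2)) α c
    ‖a-x₀‖ ‖b-x₀‖ ⟪a-x₀, b-x₀⟫ (min 1 (c/‖a-x₀‖)) (min 1 (c/‖b-x₀‖)) hL1 hα hc0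
    (norm_nonneg _) (norm_nonneg _) htl htu hsa' hsb' hm1 hm3
  -- combine
  have hsplitg : gradient g b - gradient g a
      = (gradient f b - gradient f a)
        + (((2*L1*(1 - min 1 (c/‖b-x₀‖))) • (b - x₀))
            - ((2*L1*(1 - min 1 (c/‖a-x₀‖))) • (a - x₀))) := by
    rw [hgrad_g a, hgrad_g b]; abel
  rw [hsplitg, inner_add_left, hnorm]
  rw [hnorm] at hfm
  rw [hv] at hfm
  rw [hv, hppart]
  nlinarith [hmaster, hfm]

end MainAux3

set_option maxHeartbeats 1000000 in
theorem penAux_main {E : Type*} [NormedAddCommGroup E] [InnerProductSpace ℝ E] [CompleteSpace E]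
    (f : E → ℝ) (L1 L2 α : ℝ)
    (hL1 : 0 < L1) (hL2 : 0 < L2) (hα : 0 ≤ α)
    (hf : ContDiff ℝ 2 f)
    (hglip : ∀ a b : E, ‖gradient f a - gradient f b‖ ≤ L1 * ‖a - b‖)
    (hHlip : ∀ a b : E,
      ‖fderiv ℝ (gradient f) a - fderiv ℝ (gradient f) b‖ ≤ L2 * ‖a - b‖)
    (x₀ : E)
    (hx₀ : ∀ u : E, ‖u‖ = 1 → ⟪(fderiv ℝ (gradient f) x₀) u, u⟫ ≥ -α)
    (g : E → ℝ)
    (hg : g = fun z : E => f z + L1 * (max (‖z - x₀‖ - α / L2) 0) ^ 2) :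
    (∀ a b : E, g b ≥ g a + ⟪gradient g a, b - a⟫ - (3 * α / 2) * ‖b - a‖ ^ 2) ∧
    (∀ a b : E, ‖gradient g a - gradient g b‖ ≤ 5 * L1 * ‖a - b‖) := by
  set c := α / L2 with hcdef
  have hc0 : 0 ≤ c := div_nonneg hα hL2.le
  have hcα : L2 * c = α := by rw [hcdef]; field_simp
  have hfd : Differentiable ℝ f := hf.differentiable (by norm_num)
  have hgg := penAux_gradsum f hfd L1 c hL1 hc0 x₀ g hg
  have hgrad_g : ∀ z : E, gradient g z
      = gradient f z + (2*L1*(1 - min 1 (c/‖z-x₀‖))) • (z - x₀) := fun z => (hgg z).gradient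
  -- ===== smoothness =====
  have hsmooth : ∀ a b : E, ‖gradient g a - gradient g b‖ ≤ 5 * L1 * ‖a - b‖ := by
    intro a b
    rw [hgrad_g a, hgrad_g b]
    have hsplit : gradient f a + (2*L1*(1 - min 1 (c/‖a-x₀‖))) • (a - x₀)
        - (gradient f b + (2*L1*(1 - min 1 (c/‖b-x₀‖))) • (b - x₀))
        = (gradient f a - gradient f b) +
          ((2*L1*(1 - min 1 (c/‖a-x₀‖))) • (a - x₀)
            - (2*L1*(1 - min 1 (c/‖b-x₀‖))) • (b - x₀)) := by abel
    rw [hsplit]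
    have h3 := penAux_pG_lip L1 c hL1 hc0 x₀ a b
    calc ‖(gradient f a - gradient f b) + _‖
        ≤ ‖gradient f a - gradient f b‖ + _ := norm_add_le _ _
    _ ≤ 5 * L1 * ‖a - b‖ := by
        have := hglip a b
        linarith
  -- ===== Hessian lower bound at x₀, for all vectors =====
  have hquad0 : ∀ u : E, -α * ‖u‖^2 ≤ ⟪(fderiv ℝ (gradient f) x₀) u, u⟫ := by
    intro u
    rcases eq_or_ne u 0 with h | h
    · simp [h]
    · have hu : 0 < ‖u‖ := norm_pos_iff.2 h
      have h1 := hx₀ (‖u‖⁻¹ • u) (by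
        rw [norm_smul, Real.norm_eq_abs, abs_of_nonneg (by positivity)]
        field_simp)
      rw [map_smul, real_inner_smul_left, real_inner_smul_right] at h1
      have hq : (⟪(fderiv ℝ (gradient f) x₀) u, u⟫ : ℝ)
          = ‖u‖^2 * (‖u‖⁻¹ * (‖u‖⁻¹ * ⟪(fderiv ℝ (gradient f) x₀) u, u⟫)) := by
        field_simp
      rw [hq]
      nlinarith [mul_le_mul_of_nonneg_left h1.le (sq_nonneg ‖u‖)]
  -- gradient f is differentiable
  have hgradf_cd : ContDiff ℝ 1 (gradient f) := by
    have h1 : ContDiff ℝ 1 (fderiv ℝ f) := hf.fderiv_right (by norm_num)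
    have h2 : gradient f = fun z => (InnerProductSpace.toDual ℝ E).symm (fderiv ℝ f z) := rfl
    rw [h2]
    exact ((InnerProductSpace.toDual ℝ E).symm.contDiff).comp h1
  have hgradf_d : Differentiable ℝ (gradient f) := hgradf_cd.differentiable one_ne_zero
  have hfB := penAux_fB L2 α hL2 x₀ hgradf_d hHlip hquad0
  have hmono_g := penAux_mono_g f L1 L2 α c hL1 hL2 hα hc0 hcα x₀ g hglip hfB hgrad_g
  have hdg : ∀ z : E, DifferentiableAt ℝ g z := fun z => (hgg z).differentiableAt
  have hmono' : ∀ a b : E, -(3*α)*‖b-a‖^2 ≤ ⟪gradient g b - gradient g a, b - a⟫ :=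
    hmono_g
  have hconv := penAux_conv_from_mono g hdg (3*α) hmono'
  refine ⟨fun a b => ?_, hsmooth⟩
  have := hconv a b
  have he : (3*α)/2 = 3*α/2 := by ring
  linarith [this]

/-- if `λ_min(∇²f(x₀)) ≥ -α`, then the penalized function
`g(x) = f(x) + L1·([‖x - x₀‖ - α/L2]_+)²` is `3α`-almost convex and `5L1`-smooth. -/
theorem penalized_function_almost_convex_and_smooth {d : ℕ}
    (f : EuclideanSpace ℝ (Fin d) → ℝ) (L1 L2 α : ℝ)
    (hL1 : 0 < L1) (hL2 : 0 < L2) (hα : 0 ≤ α)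
    (hf : ContDiff ℝ 2 f)
    (hglip : ∀ a b : EuclideanSpace ℝ (Fin d),
      ‖gradient f a - gradient f b‖ ≤ L1 * ‖a - b‖)
    (hHlip : ∀ a b : EuclideanSpace ℝ (Fin d),
      ‖fderiv ℝ (gradient f) a - fderiv ℝ (gradient f) b‖ ≤ L2 * ‖a - b‖)
    (x₀ : EuclideanSpace ℝ (Fin d))
    (hx₀ : ∀ u : EuclideanSpace ℝ (Fin d), ‖u‖ = 1 →
      ⟪(fderiv ℝ (gradient f) x₀) u, u⟫ ≥ -α)
    (g : EuclideanSpace ℝ (Fin d) → ℝ)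
    (hg : g = fun z : EuclideanSpace ℝ (Fin d) =>
      f z + L1 * (max (‖z - x₀‖ - α / L2) 0) ^ 2) :
    (∀ a b : EuclideanSpace ℝ (Fin d),
      g b ≥ g a + ⟪gradient g a, b - a⟫ - (3 * α / 2) * ‖b - a‖ ^ 2) ∧
    (∀ a b : EuclideanSpace ℝ (Fin d),
      ‖gradient g a - gradient g b‖ ≤ 5 * L1 * ‖a - b‖) :=
  penAux_main f L1 L2 α hL1 hL2 hα hf hglip hHlip x₀ hx₀ g hg
end
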